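/- arXiv:2006.07079 — 6 statements merged into one kernel-verified Lean document; each statement's English description precedes it below -/
import Mathlib

section
/- The group homomorphism f̄ : H → PSL(2,ℤ) determined by f̄(s) = [A·B] and f̄(t) = [A·B·A], where A = !![1,1; 0,1] and B = !![1,0; -1,1] (so A·B = !![0,1; -1,1] and A·B·A = !![0,1; -1,0]), is well defined and is an isomorphism of groups. -/
/-- `SL(2,ℤ)`: 2×2 integer matrices of determinant 1. -/
abbrev SL2Z := Matrix.SpecialLinearGroup (Fin 2) ℤ

/-- The matrix `A = !![1,1; 0,1]` as an element of `SL(2,ℤ)`. -/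
def MA : SL2Z := ⟨!![1, 1; 0, 1], by norm_num [Matrix.det_fin_two_of]⟩

/-- The matrix `B = !![1,0; -1,1]` as an element of `SL(2,ℤ)`. -/
def MB : SL2Z := ⟨!![1, 0; -1, 1], by norm_num [Matrix.det_fin_two_of]⟩

/-- `PSL(2,ℤ)`: the quotient of `SL(2,ℤ)` by its center `{±1}`. -/
abbrev PSL2Z := SL2Z ⧸ Subgroup.center SL2Z

/-- Relations for the presented group `H = ⟨s, t | s³ = 1, t² = 1⟩`,
with `s` corresponding to `0` and `t` to `1`. -/
def hRels : Set (FreeGroup (Fin 2)) :=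
  { FreeGroup.of 0 ^ 3, FreeGroup.of 1 ^ 2 }

/-- The presented group `H = ⟨s, t | s³ = 1, t² = 1⟩`. -/
abbrev Hgrp := PresentedGroup hRels

/-- The generator `s` of `H`. -/
def hs : Hgrp := PresentedGroup.of 0

/-- The generator `t` of `H`. -/
def ht : Hgrp := PresentedGroup.of 1

/-! ### Matrix computations -/

lemma coeU : (MA * MB).1 = !![0,1;-1,1] := by
  rw [Matrix.SpecialLinearGroup.coe_mul]
  simp [MA, MB, Matrix.SpecialLinearGroup.coe_mul, Matrix.mul_fin_two]

lemma coeV : (MA * MB * MA).1 = !![0,1;-1,0] := by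
  have : (MA * MB * MA).1 = (MA*MB).1 * MA.1 := rfl
  rw [this, coeU]; simp [MA, Matrix.mul_fin_two]

lemma coeU2 : ((MA * MB)^2).1 = !![-1,1;-1,0] := by
  have : ((MA*MB)^2).1 = (MA*MB).1 * (MA*MB).1 := by
    simp [pow_two, Matrix.SpecialLinearGroup.coe_mul]
  rw [this, coeU]; simp [Matrix.mul_fin_two]

def negOne : SL2Z := ⟨!![-1,0;0,-1], by norm_num [Matrix.det_fin_two_of]⟩

lemma U3 : (MA * MB)^3 = negOne := by
  ext i j
  have : ((MA*MB)^3).1 = (MA*MB).1 * ((MA*MB).1 * (MA*MB).1) := by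
    simp [pow_succ, Matrix.SpecialLinearGroup.coe_mul, mul_assoc]
  rw [this, coeU]
  fin_cases i <;> fin_cases j <;> simp [negOne, Matrix.mul_fin_two]

lemma V2 : (MA * MB * MA)^2 = negOne := by
  ext i j
  have : ((MA*MB*MA)^2).1 = (MA*MB*MA).1 * (MA*MB*MA).1 := by
    simp [pow_two, Matrix.SpecialLinearGroup.coe_mul]
  rw [this, coeV]
  fin_cases i <;> fin_cases j <;> simp [negOne, Matrix.mul_fin_two]

lemma negOne_center : negOne ∈ Subgroup.center SL2Z := by
  rw [Matrix.SpecialLinearGroup.mem_center_iff]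
  refine ⟨-1, by norm_num, ?_⟩
  ext i j
  fin_cases i <;> fin_cases j <;>
    simp only [Matrix.scalar_apply, Matrix.diagonal_apply] <;> norm_num [negOne]

lemma det_rel (g : SL2Z) : g.1 0 0 * g.1 1 1 - g.1 0 1 * g.1 1 0 = 1 := by
  have := g.2; rwa [Matrix.det_fin_two] at this

/-! ### The Möbius action on irrational numbers -/

def mnum (g : SL2Z) (x : ℝ) : ℝ := (g.1 0 0 : ℝ) * x + (g.1 0 1 : ℝ)
def mden (g : SL2Z) (x : ℝ) : ℝ := (g.1 1 0 : ℝ) * x + (g.1 1 1 : ℝ)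
noncomputable def mact (g : SL2Z) (x : ℝ) : ℝ := mnum g x / mden g x

lemma mact_explicit (g : SL2Z) (x : ℝ) :
    mact g x = ((g.1 0 0 : ℝ) * x + g.1 0 1) / ((g.1 1 0 : ℝ) * x + g.1 1 1) := rfl

lemma mden_ne_zero (g : SL2Z) {x : ℝ} (hx : Irrational x) : mden g x ≠ 0 := by
  intro h
  rcases eq_or_ne (g.1 1 0) 0 with hc | hc
  · have hd : (g.1 1 1 : ℝ) = 0 := by simpa [mden, hc] using h
    have hd' : g.1 1 1 = 0 := by exact_mod_cast hd
    have := det_rel g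
    rw [hc, hd'] at this; simp at this
  · apply hx
    refine ⟨(-(g.1 1 1) : ℚ) / (g.1 1 0 : ℚ), ?_⟩
    have hc' : ((g.1 1 0 : ℚ) : ℝ) ≠ 0 := by exact_mod_cast (Int.cast_ne_zero (α := ℝ)).2 hc
    push_cast
    rw [div_eq_iff (by exact_mod_cast hc')]
    unfold mden at h
    push_cast at h ⊢
    linarith

lemma mact_irrational (g : SL2Z) {x : ℝ} (hx : Irrational x) : Irrational (mact g x) := by
  rintro ⟨q, hq⟩
  have hden := mden_ne_zero g hx
  have h1 : mnum g x = (q : ℝ) * mden g x := by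
    rw [hq]; unfold mact; field_simp
  unfold mnum mden at h1
  set a := (g.1 0 0 : ℝ); set b := (g.1 0 1 : ℝ); set c := (g.1 1 0 : ℝ); set d := (g.1 1 1 : ℝ)
  have key : (a - q * c) * x = q * d - b := by ring_nf; ring_nf at h1; linarith
  rcases eq_or_ne (a - (q:ℝ) * c) 0 with h0 | h0
  · have hb : b = q * d := by
      have := key; rw [h0, zero_mul] at this; linarith
    have ha : a = q * c := by linarith [sub_eq_zero.mp h0]
    have hdet : a * d - b * c = 1 := by
      have := det_rel g; push_cast [a, b, c, d]; exact_mod_cast this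
    rw [ha, hb] at hdet; ring_nf at hdet
    nlinarith [hdet]
  · apply hx
    refine ⟨((q * (g.1 1 1 : ℚ) - (g.1 0 1 : ℚ)) / ((g.1 0 0 : ℚ) - q * (g.1 1 0 : ℚ))), ?_⟩
    have h0' : (((g.1 0 0 : ℚ) - q * (g.1 1 0 : ℚ) : ℚ) : ℝ) ≠ 0 := by push_cast; exact h0
    push_cast
    rw [eq_comm, eq_div_iff (by push_cast at h0'; exact h0')]
    linarith [key]

lemma mact_one (x : ℝ) : mact 1 x = x := by
  simp [mact, mnum, mden]

lemma mact_mul (g h : SL2Z) {x : ℝ} (hx : Irrational x) :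
    mact (g * h) x = mact g (mact h x) := by
  have h1 : mden h x ≠ 0 := mden_ne_zero h hx
  have h2 : mden g (mact h x) ≠ 0 := mden_ne_zero g (mact_irrational h hx)
  have h3 : mden (g * h) x ≠ 0 := mden_ne_zero (g * h) hx
  have e00 : ((g*h).1 0 0 : ℝ) = g.1 0 0 * h.1 0 0 + g.1 0 1 * h.1 1 0 := by
    rw [Matrix.SpecialLinearGroup.coe_mul]; push_cast [Matrix.mul_apply, Fin.sum_univ_two]; ring
  have e01 : ((g*h).1 0 1 : ℝ) = g.1 0 0 * h.1 0 1 + g.1 0 1 * h.1 1 1 := by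
    rw [Matrix.SpecialLinearGroup.coe_mul]; push_cast [Matrix.mul_apply, Fin.sum_univ_two]; ring
  have e10 : ((g*h).1 1 0 : ℝ) = g.1 1 0 * h.1 0 0 + g.1 1 1 * h.1 1 0 := by
    rw [Matrix.SpecialLinearGroup.coe_mul]; push_cast [Matrix.mul_apply, Fin.sum_univ_two]; ring
  have e11 : ((g*h).1 1 1 : ℝ) = g.1 1 0 * h.1 0 1 + g.1 1 1 * h.1 1 1 := by
    rw [Matrix.SpecialLinearGroup.coe_mul]; push_cast [Matrix.mul_apply, Fin.sum_univ_two]; ring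
  unfold mact mnum mden at *
  rw [e00, e01, e10, e11]
  field_simp
  ring

def Irr : Type := {x : ℝ // Irrational x}

noncomputable instance instSL : MulAction SL2Z Irr where
  smul g x := ⟨mact g x.1, mact_irrational g x.2⟩
  one_smul x := Subtype.ext (mact_one x.1)
  mul_smul g h x := Subtype.ext (mact_mul g h x.2)

lemma smul_coe (g : SL2Z) (x : Irr) : (g • x).1 = mact g x.1 := rfl

lemma center_smul {z : SL2Z} (hz : z ∈ Subgroup.center SL2Z) (x : Irr) : z • x = x := by
  obtain ⟨r, hr, hsc⟩ := Matrix.SpecialLinearGroup.mem_center_iff.mp hz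
  have h00 : z.1 0 0 = r := by
    rw [← hsc]; simp only [Matrix.scalar_apply, Matrix.diagonal_apply]; norm_num
  have h01 : z.1 0 1 = 0 := by
    rw [← hsc]; simp only [Matrix.scalar_apply, Matrix.diagonal_apply]; norm_num
  have h10 : z.1 1 0 = 0 := by
    rw [← hsc]; simp only [Matrix.scalar_apply, Matrix.diagonal_apply]; norm_num
  have h11 : z.1 1 1 = r := by
    rw [← hsc]; simp only [Matrix.scalar_apply, Matrix.diagonal_apply]; norm_num
  have hr0 : (r : ℝ) ≠ 0 := by
    intro h; rw [show r = 0 by exact_mod_cast h] at hr; simp at hr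
  apply Subtype.ext
  rw [smul_coe, mact_explicit, h00, h01, h10, h11]
  push_cast
  field_simp
  rw [add_zero, mul_zero, zero_add, mul_div_cancel_left₀ _ hr0]

noncomputable def permHom : PSL2Z →* Equiv.Perm Irr :=
  QuotientGroup.lift (Subgroup.center SL2Z) (MulAction.toPermHom SL2Z Irr)
    (fun z hz => Equiv.ext fun x => center_smul hz x)

noncomputable instance instPSL : MulAction PSL2Z Irr := MulAction.compHom Irr permHom

lemma psl_smul (g : SL2Z) (x : Irr) : (QuotientGroup.mk g : PSL2Z) • x = g • x := rfl

/-! ### Cyclic group homomorphisms -/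

def cyc {G : Type*} [Group G] (n : ℕ) (g : G) (h : g ^ n = 1) : Multiplicative (ZMod n) →* G :=
  AddMonoidHom.toMultiplicativeLeft
    (ZMod.lift n ⟨zmultiplesHom (Additive G) (Additive.ofMul g), by
      have : ((n : ℤ) • Additive.ofMul g) = Additive.ofMul (g ^ (n:ℤ)) := rfl
      simp [zmultiplesHom_apply, this, zpow_natCast, h]⟩)

lemma cyc_apply {G : Type*} [Group G] (n : ℕ) (g : G) (h : g ^ n = 1) (k : ℤ) :
    cyc n g h (Multiplicative.ofAdd ((k : ZMod n))) = g ^ k := by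
  simp [cyc, AddMonoidHom.coe_toMultiplicativeLeft, ZMod.lift_coe, zmultiplesHom_apply]

lemma cyc_one {G : Type*} [Group G] (n : ℕ) (g : G) (h : g ^ n = 1) :
    cyc n g h (Multiplicative.ofAdd (1 : ZMod n)) = g := by
  have := cyc_apply n g h 1
  simpa using this

/-! ### The free product `ℤ/3 * ℤ/2` -/

abbrev nn : Fin 2 → ℕ := ![3, 2]
abbrev Hfam (i : Fin 2) : Type := Multiplicative (ZMod (nn i))

lemma zmod3_cases : ∀ z : ZMod 3,
    z = ((0:ℤ) : ZMod 3) ∨ z = ((1:ℤ) : ZMod 3) ∨ z = ((2:ℤ) : ZMod 3) := by decide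
lemma zmod2_cases : ∀ z : ZMod 2, z = ((0:ℤ) : ZMod 2) ∨ z = ((1:ℤ) : ZMod 2) := by decide

lemma card3 : (3 : Cardinal) ≤ Cardinal.mk (Hfam 0) := by
  rw [show (Hfam 0) = Multiplicative (ZMod 3) from rfl]
  rw [Cardinal.mk_fintype]
  norm_num

noncomputable def mkP : SL2Z →* PSL2Z := QuotientGroup.mk' (Subgroup.center SL2Z)

lemma mkP_apply (g : SL2Z) : mkP g = QuotientGroup.mk g := rfl

lemma mk_negOne : (QuotientGroup.mk negOne : PSL2Z) = 1 := by
  rw [QuotientGroup.eq_one_iff]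
  exact negOne_center

def gv : Fin 2 → PSL2Z := ![QuotientGroup.mk (MA * MB), QuotientGroup.mk (MA * MB * MA)]

lemma gv_pow : ∀ i, gv i ^ nn i = 1 := by
  intro i
  fin_cases i
  · show (QuotientGroup.mk (MA * MB) : PSL2Z) ^ 3 = 1
    rw [← mkP_apply, ← map_pow, U3, mkP_apply, mk_negOne]
  · show (QuotientGroup.mk (MA * MB * MA) : PSL2Z) ^ 2 = 1
    rw [← mkP_apply, ← map_pow, V2, mkP_apply, mk_negOne]

noncomputable def fi : ∀ i, Hfam i →* PSL2Z := fun i => cyc (nn i) (gv i) (gv_pow i)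

/-! ### Ping pong sets -/

def XS : Fin 2 → Set Irr := ![{x | 0 < x.1}, {x | x.1 < 0}]

lemma XS_nonempty : ∀ i, (XS i).Nonempty := by
  intro i
  fin_cases i
  · exact ⟨⟨Real.sqrt 2, irrational_sqrt_two⟩, by
      show (0:ℝ) < Real.sqrt 2; positivity⟩
  · exact ⟨⟨-Real.sqrt 2, irrational_sqrt_two.neg⟩, by
      show -Real.sqrt 2 < (0:ℝ)
      have : (0:ℝ) < Real.sqrt 2 := by positivity
      linarith⟩

lemma XS_disj : Pairwise (Function.onFun Disjoint XS) := by
  intro i j hij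
  fin_cases i <;> fin_cases j
  · exact absurd rfl hij
  · refine Set.disjoint_left.mpr ?_
    intro x hx hx'
    have h1 : (0:ℝ) < x.1 := hx
    have h2 : x.1 < 0 := hx'
    linarith
  · refine Set.disjoint_left.mpr ?_
    intro x hx hx'
    have h1 : x.1 < 0 := hx
    have h2 : (0:ℝ) < x.1 := hx'
    linarith
  · exact absurd rfl hij

/-! smul computations -/

lemma smul_U {x : Irr} (hx : x.1 < 0) : (0:ℝ) < ((QuotientGroup.mk (MA*MB) : PSL2Z) • x).1 := by
  rw [psl_smul, smul_coe, mact_explicit, coeU]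
  have : (1:ℝ) - x.1 > 0 := by linarith
  norm_num
  linarith

lemma smul_U2 {x : Irr} (hx : x.1 < 0) :
    (0:ℝ) < ((QuotientGroup.mk ((MA*MB)^2) : PSL2Z) • x).1 := by
  rw [psl_smul, smul_coe, mact_explicit, coeU2]
  norm_num
  have h1 : (0:ℝ) < -x.1 + 1 := by linarith
  have h2 : (0:ℝ) < -x.1 := by linarith
  positivity

lemma smul_V {x : Irr} (hx : 0 < x.1) : ((QuotientGroup.mk (MA*MB*MA) : PSL2Z) • x).1 < 0 := by
  rw [psl_smul, smul_coe, mact_explicit, coeV]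
  norm_num
  exact hx

open Pointwise in
lemma pp01 : ∀ h : Hfam 0, h ≠ 1 → fi 0 h • XS 1 ⊆ XS 0 := by
  intro h hne
  rcases zmod3_cases (Multiplicative.toAdd h) with h0 | h1 | h2
  · exfalso; apply hne
    have : h = Multiplicative.ofAdd ((0:ℤ) : ZMod 3) := h0
    rw [this]; norm_num; rfl
  · have hh : h = Multiplicative.ofAdd (((1:ℤ)) : ZMod (nn 0)) := h1
    subst hh
    rintro y ⟨x, hx, rfl⟩
    have hx' : x.1 < 0 := hx
    have he : fi 0 (Multiplicative.ofAdd (((1:ℤ)) : ZMod (nn 0))) =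
        QuotientGroup.mk (MA*MB) := by
      rw [fi, cyc_apply, zpow_one]; rfl
    show (0:ℝ) < ((fi 0 (Multiplicative.ofAdd (((1:ℤ)) : ZMod (nn 0)))) • x).1
    rw [he]
    exact smul_U hx'
  · have hh : h = Multiplicative.ofAdd (((2:ℤ)) : ZMod (nn 0)) := h2
    subst hh
    rintro y ⟨x, hx, rfl⟩
    have hx' : x.1 < 0 := hx
    have he : fi 0 (Multiplicative.ofAdd (((2:ℤ)) : ZMod (nn 0))) =
        QuotientGroup.mk ((MA*MB)^2) := by
      rw [fi, cyc_apply, ← mkP_apply, map_pow, zpow_two, pow_two]; rfl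
    show (0:ℝ) < ((fi 0 (Multiplicative.ofAdd (((2:ℤ)) : ZMod (nn 0)))) • x).1
    rw [he]
    exact smul_U2 hx'

open Pointwise in
lemma pp10 : ∀ h : Hfam 1, h ≠ 1 → fi 1 h • XS 0 ⊆ XS 1 := by
  intro h hne
  rcases zmod2_cases (Multiplicative.toAdd h) with h0 | h1
  · exfalso; apply hne
    have : h = Multiplicative.ofAdd ((0:ℤ) : ZMod 2) := h0
    rw [this]; norm_num; rfl
  · have hh : h = Multiplicative.ofAdd (((1:ℤ)) : ZMod (nn 1)) := h1
    subst hh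
    rintro y ⟨x, hx, rfl⟩
    have hx' : 0 < x.1 := hx
    have he : fi 1 (Multiplicative.ofAdd (((1:ℤ)) : ZMod (nn 1))) =
        QuotientGroup.mk (MA*MB*MA) := by
      rw [fi, cyc_apply, zpow_one]; rfl
    show ((fi 1 (Multiplicative.ofAdd (((1:ℤ)) : ZMod (nn 1)))) • x).1 < 0
    rw [he]
    exact smul_V hx'

open Pointwise in
lemma XS_pp : Pairwise fun i j => ∀ h : Hfam i, h ≠ 1 → fi i h • XS j ⊆ XS i := by
  intro i j hij
  fin_cases i <;> fin_cases j
  · exact absurd rfl hij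
  · exact pp01
  · exact pp10
  · exact absurd rfl hij

noncomputable def phi : Monoid.CoprodI Hfam →* PSL2Z := Monoid.CoprodI.lift fi

lemma phi_injective : Function.Injective phi :=
  Monoid.CoprodI.lift_injective_of_ping_pong fi (Or.inr ⟨0, card3⟩) XS
    XS_nonempty XS_disj XS_pp

/-! ### The presented group maps -/

lemma mem_rels1 : FreeGroup.of 0 ^ 3 ∈ hRels := Set.mem_insert _ _
lemma mem_rels2 : FreeGroup.of 1 ^ 2 ∈ hRels := Set.mem_insert_of_mem _ rfl

lemma hgen_pow : ∀ i : Fin 2, (PresentedGroup.of (rels := hRels) i) ^ nn i = 1 := by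
  intro i
  fin_cases i
  · show (PresentedGroup.of (rels := hRels) 0) ^ 3 = 1
    rw [show PresentedGroup.of (rels := hRels) 0 = PresentedGroup.mk hRels (FreeGroup.of 0)
      from rfl, ← map_pow]
    exact (QuotientGroup.eq_one_iff _).mpr (Subgroup.subset_normalClosure mem_rels1)
  · show (PresentedGroup.of (rels := hRels) 1) ^ 2 = 1
    rw [show PresentedGroup.of (rels := hRels) 1 = PresentedGroup.mk hRels (FreeGroup.of 1)
      from rfl, ← map_pow]
    exact (QuotientGroup.eq_one_iff _).mpr (Subgroup.subset_normalClosure mem_rels2)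

noncomputable def rho : Monoid.CoprodI Hfam →* Hgrp :=
  Monoid.CoprodI.lift (fun i => cyc (nn i) (PresentedGroup.of i) (hgen_pow i))

lemma psi_rels : ∀ r ∈ hRels,
    FreeGroup.lift (fun i => Monoid.CoprodI.of (M := Hfam)
      (Multiplicative.ofAdd (1 : ZMod (nn i)))) r = 1 := by
  intro r hr
  rcases hr with rfl | hr
  · rw [map_pow, FreeGroup.lift_apply_of, ← map_pow]
    rw [show (Multiplicative.ofAdd (1 : ZMod (nn 0))) ^ 3 = 1 by decide]
    exact map_one _
  · rw [Set.mem_singleton_iff] at hr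
    subst hr
    rw [map_pow, FreeGroup.lift_apply_of, ← map_pow]
    rw [show (Multiplicative.ofAdd (1 : ZMod (nn 1))) ^ 2 = 1 by decide]
    exact map_one _

noncomputable def psi : Hgrp →* Monoid.CoprodI Hfam := PresentedGroup.toGroup psi_rels

lemma psi_of (i : Fin 2) :
    psi (PresentedGroup.of i) =
      Monoid.CoprodI.of (M := Hfam) (Multiplicative.ofAdd (1 : ZMod (nn i))) :=
  PresentedGroup.toGroup.of psi_rels

lemma rho_psi (x : Hgrp) : rho (psi x) = x := by
  have : rho.comp psi = MonoidHom.id Hgrp := by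
    apply PresentedGroup.ext
    intro i
    simp only [MonoidHom.comp_apply, MonoidHom.id_apply, psi_of]
    rw [rho, Monoid.CoprodI.lift_of]
    exact cyc_one _ _ _
  calc rho (psi x) = (rho.comp psi) x := rfl
    _ = x := by rw [this]; rfl

noncomputable def hh : Hgrp →* PSL2Z := phi.comp psi

lemma hh_injective : Function.Injective hh := by
  have hpsi : Function.Injective psi := Function.LeftInverse.injective rho_psi
  exact phi_injective.comp hpsi

lemma hh_s : hh hs = QuotientGroup.mk (MA * MB) := by
  show phi (psi (PresentedGroup.of 0)) = _
  rw [psi_of, phi, Monoid.CoprodI.lift_of]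
  have := cyc_one (nn 0) (gv 0) (gv_pow 0)
  rw [show ((1 : ZMod (nn 0))) = (((1:ℤ)) : ZMod (nn 0)) by norm_num] at this
  rw [show fi 0 = cyc (nn 0) (gv 0) (gv_pow 0) from rfl]
  rw [show ((1 : ZMod (nn 0))) = (((1:ℤ)) : ZMod (nn 0)) by norm_num]
  rw [this]
  rfl

lemma hh_t : hh ht = QuotientGroup.mk (MA * MB * MA) := by
  show phi (psi (PresentedGroup.of 1)) = _
  rw [psi_of, phi, Monoid.CoprodI.lift_of]
  rw [show fi 1 = cyc (nn 1) (gv 1) (gv_pow 1) from rfl]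
  rw [cyc_one (nn 1) (gv 1) (gv_pow 1)]
  rfl

/-! ### Surjectivity -/

lemma MA_inv : (MA⁻¹).1 = !![1,-1;0,1] := by
  rw [Matrix.SpecialLinearGroup.SL2_inv_expl]
  simp [MA]
  ext i j; fin_cases i <;> fin_cases j <;> simp

lemma MA_zpow (n : ℤ) : (MA ^ n).1 = !![1, n; 0, 1] := by
  induction n using Int.induction_on with
  | zero => ext i j; simp; fin_cases i <;> fin_cases j <;> simp
  | succ k ih =>
    rw [zpow_add, zpow_one, Matrix.SpecialLinearGroup.coe_mul, ih]
    show _ = !![(1:ℤ), (k:ℤ)+1; 0, 1]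
    rw [show (MA.1 : Matrix (Fin 2) (Fin 2) ℤ) = !![1,1;0,1] from rfl]
    rw [Matrix.mul_fin_two]; norm_num [add_comm]
  | pred k ih =>
    rw [sub_eq_add_neg, zpow_add, Matrix.SpecialLinearGroup.coe_mul, ih, zpow_neg, zpow_one, MA_inv]
    rw [Matrix.mul_fin_two]; norm_num [add_comm]

open Subgroup in
lemma gen (g : SL2Z) : g ∈ Subgroup.closure {MA, MB} := by
  have hMA : MA ∈ Subgroup.closure {MA, MB} := Subgroup.subset_closure (by simp)
  have hMB : MB ∈ Subgroup.closure {MA, MB} := Subgroup.subset_closure (by simp)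
  have hV : MA * MB * MA ∈ Subgroup.closure {MA, MB} := mul_mem (mul_mem hMA hMB) hMA
  have hneg : negOne ∈ Subgroup.closure {MA, MB} := by rw [← V2]; exact pow_mem hV 2
  generalize hc : (g.1 1 0).natAbs = n
  induction n using Nat.strong_induction_on generalizing g with
  | _ n ih =>
  rcases eq_or_ne (g.1 1 0) 0 with h0 | h0
  · have hdet := det_rel g
    rw [h0] at hdet
    have hdet' : g.1 0 0 * g.1 1 1 = 1 := by linarith
    rcases Int.mul_eq_one_iff_eq_one_or_neg_one.mp hdet' with ⟨ha, hd⟩ | ⟨ha, hd⟩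
    · have : g = MA ^ (g.1 0 1) := by
        apply Subtype.ext
        rw [MA_zpow]
        ext i j; fin_cases i <;> fin_cases j <;> simp [ha, hd, h0]
      rw [this]; exact zpow_mem hMA _
    · have : g = negOne * MA ^ (-(g.1 0 1)) := by
        apply Subtype.ext
        rw [Matrix.SpecialLinearGroup.coe_mul, MA_zpow]
        rw [show (negOne.1 : Matrix (Fin 2) (Fin 2) ℤ) = !![-1,0;0,-1] from rfl]
        rw [Matrix.mul_fin_two]
        ext i j; fin_cases i <;> fin_cases j <;> simp [ha, hd, h0]
      rw [this]; exact mul_mem hneg (zpow_mem hMA _)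
  · set q := g.1 0 0 / g.1 1 0 with hq
    set g' := (MA * MB * MA) * (MA ^ (-q)) * g with hg'
    have hent : g'.1 1 0 = -(g.1 0 0 % g.1 1 0) := by
      have e1 : g'.1 = (MA*MB*MA).1 * ((MA^(-q)).1 * g.1) := by
        rw [hg']; simp [Matrix.SpecialLinearGroup.coe_mul, Matrix.mul_assoc]
      rw [e1, coeV, MA_zpow]
      rw [Matrix.eta_fin_two g.1]
      rw [Matrix.mul_fin_two, Matrix.mul_fin_two]
      simp
      rw [Int.emod_def, hq]
      ring
    have hlt : (g'.1 1 0).natAbs < n := by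
      rw [hent, ← hc]
      have h1 : 0 ≤ g.1 0 0 % g.1 1 0 := Int.emod_nonneg _ h0
      have h2 : g.1 0 0 % g.1 1 0 < |g.1 1 0| := by
        rcases h0.lt_or_gt with hneg | hpos
        · rw [← Int.emod_neg]
          have := Int.emod_lt_of_pos (g.1 0 0) (b := -(g.1 1 0)) (by linarith)
          rwa [abs_of_neg hneg]
        · rw [abs_of_pos hpos]; exact Int.emod_lt_of_pos _ hpos
      have h2' : g.1 0 0 % g.1 1 0 < ((g.1 1 0).natAbs : ℤ) := by
        rwa [Int.abs_eq_natAbs] at h2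
      rw [Int.natAbs_neg]
      omega
    have hg'mem : g' ∈ Subgroup.closure {MA, MB} := ih _ hlt g' rfl
    have : g = (MA ^ q) * (MA * MB * MA)⁻¹ * g' := by
      rw [hg']; group
    rw [this]
    exact mul_mem (mul_mem (zpow_mem hMA q) (inv_mem hV)) hg'mem

lemma MB_eq : MB = (MA * MB * MA) * (MA * MB)⁻¹ := by
  rw [eq_mul_inv_iff_mul_eq]
  apply Subtype.ext
  rw [Matrix.SpecialLinearGroup.coe_mul, coeV, coeU]
  rw [show (MB.1 : Matrix (Fin 2) (Fin 2) ℤ) = !![1,0;-1,1] from rfl]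
  rw [Matrix.mul_fin_two]; norm_num

lemma MA_eq : MA = (MA * MB)^2 * (MA * MB * MA)⁻¹ := by
  rw [eq_mul_inv_iff_mul_eq]
  apply Subtype.ext
  rw [Matrix.SpecialLinearGroup.coe_mul, coeU2, coeV]
  rw [show (MA.1 : Matrix (Fin 2) (Fin 2) ℤ) = !![1,1;0,1] from rfl]
  rw [Matrix.mul_fin_two]; norm_num

lemma hh_surjective : Function.Surjective hh := by
  intro x
  induction x using QuotientGroup.induction_on with
  | _ g =>
  suffices hmem : (QuotientGroup.mk g : PSL2Z) ∈ hh.range by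
    obtain ⟨y, hy⟩ := hmem; exact ⟨y, hy⟩
  have hU : (QuotientGroup.mk (MA * MB) : PSL2Z) ∈ hh.range := ⟨hs, hh_s⟩
  have hVmem : (QuotientGroup.mk (MA * MB * MA) : PSL2Z) ∈ hh.range := ⟨ht, hh_t⟩
  have hMA : (QuotientGroup.mk MA : PSL2Z) ∈ hh.range := by
    rw [MA_eq, ← mkP_apply, map_mul, map_inv, map_pow]
    exact mul_mem (pow_mem hU 2) (inv_mem hVmem)
  have hMB : (QuotientGroup.mk MB : PSL2Z) ∈ hh.range := by
    rw [MB_eq, ← mkP_apply, map_mul, map_inv]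
    exact mul_mem hVmem (inv_mem hU)
  refine Subgroup.closure_induction (k := {MA, MB})
    (p := fun a _ => (QuotientGroup.mk a : PSL2Z) ∈ hh.range) ?_ ?_ ?_ ?_ (gen g)
  · rintro x (rfl | rfl)
    · exact hMA
    · exact hMB
  · exact one_mem _
  · intro a b _ _ ha hb
    rw [← mkP_apply, map_mul]
    exact mul_mem ha hb
  · intro a _ ha
    rw [← mkP_apply, map_inv]
    exact inv_mem ha

theorem stmt2 :
    ∃ f : Hgrp ≃* PSL2Z,
      f hs = (QuotientGroup.mk (MA * MB) : PSL2Z) ∧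
      f ht = (QuotientGroup.mk (MA * MB * MA) : PSL2Z) := by
  refine ⟨MulEquiv.ofBijective hh ⟨hh_injective, hh_surjective⟩, ?_, ?_⟩
  · exact hh_s
  · exact hh_t
end

section
/- In the group M04, the elements a = σ1σ3⁻¹ and b = σ2σ1σ3⁻¹σ2⁻¹ satisfy a² = 1, b² = 1, and ab = ba. -/
/-- Relations for the presented group
`M04 = ⟨σ1, σ2, σ3 | σ1σ3 = σ3σ1, σ1σ2σ1 = σ2σ1σ2, σ3σ2σ3 = σ2σ3σ2,
(σ1σ2σ3)⁴ = 1, σ1σ2σ3²σ2σ1 = 1⟩`, a presentation of the mapping class group of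
the 4-punctured sphere, with `σ1, σ2, σ3` corresponding to `0, 1, 2`. -/
def m4Rels : Set (FreeGroup (Fin 3)) :=
  { FreeGroup.of 0 * FreeGroup.of 2 * (FreeGroup.of 2 * FreeGroup.of 0)⁻¹,
    FreeGroup.of 0 * FreeGroup.of 1 * FreeGroup.of 0 *
      (FreeGroup.of 1 * FreeGroup.of 0 * FreeGroup.of 1)⁻¹,
    FreeGroup.of 2 * FreeGroup.of 1 * FreeGroup.of 2 *
      (FreeGroup.of 1 * FreeGroup.of 2 * FreeGroup.of 1)⁻¹,
    (FreeGroup.of 0 * FreeGroup.of 1 * FreeGroup.of 2) ^ 4,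
    FreeGroup.of 0 * FreeGroup.of 1 * FreeGroup.of 2 ^ 2 * FreeGroup.of 1 * FreeGroup.of 0 }

/-- The mapping class group of the 4-punctured sphere, by its presentation. -/
abbrev M04 := PresentedGroup m4Rels

/-- The generator `σ1` of `M04`. -/
def m4s1 : M04 := PresentedGroup.of 0

/-- The generator `σ2` of `M04`. -/
def m4s2 : M04 := PresentedGroup.of 1

/-- The generator `σ3` of `M04`. -/
def m4s3 : M04 := PresentedGroup.of 2

/-- The element `a = σ1σ3⁻¹` of `M04`. -/
def ea : M04 := m4s1 * m4s3⁻¹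

/-- The element `b = σ2σ1σ3⁻¹σ2⁻¹` of `M04`. -/
def eb : M04 := m4s2 * m4s1 * m4s3⁻¹ * m4s2⁻¹

/-- The subgroup `N` of `M04` generated by `a` and `b`. -/
def Nsub : Subgroup M04 := Subgroup.closure {ea, eb}

/-- The subgroup `G` of `M04` generated by `σ1` and `σ2`. -/
def Gsub : Subgroup M04 := Subgroup.closure {m4s1, m4s2}

set_option maxHeartbeats 1000000 in
private theorem m4_main {G : Type*} [Group G] (x y z : G)
    (h1 : x*z = z*x) (h2 : x*y*x = y*x*y) (h3 : z*y*z = y*z*y)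
    (h4 : (x*y*z)^4 = 1) (h5 : x*y*z^2*y*x = 1) :
    (x*z⁻¹)*(x*z⁻¹) = 1 ∧ (y*x*z⁻¹*y⁻¹)*(y*x*z⁻¹*y⁻¹) = 1 ∧
      (x*z⁻¹)*(y*x*z⁻¹*y⁻¹) = (y*x*z⁻¹*y⁻¹)*(x*z⁻¹) := by
  -- z⁻¹ x = x z⁻¹
  have hzx : z⁻¹*x = x*z⁻¹ := by
    calc z⁻¹*x = z⁻¹*(x*z)*z⁻¹ := by group
    _ = z⁻¹*(z*x)*z⁻¹ := by rw [h1]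
    _ = x*z⁻¹ := by group
  -- (xyz)⁻¹ = zyx, hence (xyz)² = (zyx)²
  have hc : z*y*x = (x*y*z)⁻¹ := by
    have h : (x*y*z)*(z*y*x) = 1 := by
      calc (x*y*z)*(z*y*x) = x*y*z^2*y*x := by rw [pow_two]; group
      _ = 1 := h5
    exact (inv_eq_of_mul_eq_one_right h).symm
  -- expansions of the squares
  have E1 : (x*y*z)^2 = y*x*(y*y)*z*y := by
    calc (x*y*z)^2 = x*y*(z*x)*y*z := by rw [pow_two]; group
    _ = x*y*(x*z)*y*z := by rw [← h1]
    _ = (x*y*x)*(z*y*z) := by group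
    _ = (y*x*y)*(y*z*y) := by rw [h2, h3]
    _ = y*x*(y*y)*z*y := by group
  have E2 : (z*y*x)^2 = y*z*(y*y)*x*y := by
    calc (z*y*x)^2 = z*y*(x*z)*y*x := by rw [pow_two]; group
    _ = z*y*(z*x)*y*x := by rw [h1]
    _ = (z*y*z)*(x*y*x) := by group
    _ = (y*z*y)*(y*x*y) := by rw [h3, h2]
    _ = y*z*(y*y)*x*y := by group
  have S2 : (x*y*z)^2 = (z*y*x)^2 := by
    have h4' : (x*y*z)^2 * (x*y*z)^2 = 1 := by
      calc (x*y*z)^2 * (x*y*z)^2 = (x*y*z)^4 := by rw [← pow_add]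
      _ = 1 := h4
    calc (x*y*z)^2 = ((x*y*z)^2)⁻¹ := (inv_eq_of_mul_eq_one_right h4').symm
    _ = ((x*y*z)⁻¹)^2 := (inv_pow _ _).symm
    _ = (z*y*x)^2 := by rw [← hc]
  -- x y² z = z y² x
  have S4 : x*(y*y)*z = z*(y*y)*x := by
    have h := S2
    rw [E1, E2] at h
    have h9 : y * (x*(y*y)*z) * y = y * (z*(y*y)*x) * y := by
      calc y * (x*(y*y)*z) * y = y*x*(y*y)*z*y := by group
      _ = y*z*(y*y)*x*y := h
      _ = y * (z*(y*y)*x) * y := by group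
    exact mul_left_cancel (mul_right_cancel h9)
  -- p q commute, where p = x y², q = z y²
  have hcomm : (x*(y*y))*(z*(y*y)) = (z*(y*y))*(x*(y*y)) := by
    calc (x*(y*y))*(z*(y*y)) = (x*(y*y)*z)*(y*y) := by group
    _ = (z*(y*y)*x)*(y*y) := by rw [S4]
    _ = (z*(y*y))*(x*(y*y)) := by group
  -- (pq)² = 1
  have hpqpq : ((x*(y*y))*(z*(y*y))) * ((x*(y*y))*(z*(y*y))) = 1 := by
    have hc4 : (y*x*(y*y)*z*y) * (y*x*(y*y)*z*y) = 1 := by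
      calc (y*x*(y*y)*z*y) * (y*x*(y*y)*z*y) = (x*y*z)^2 * (x*y*z)^2 := by rw [← E1]
      _ = (x*y*z)^4 := by rw [← pow_add]
      _ = 1 := h4
    calc ((x*(y*y))*(z*(y*y))) * ((x*(y*y))*(z*(y*y)))
        = y⁻¹ * ((y*x*(y*y)*z*y) * (y*x*(y*y)*z*y)) * y := by group
    _ = y⁻¹ * 1 * y := by rw [hc4]
    _ = 1 := by group
  -- p² q² = 1
  have hp2q2 : ((x*(y*y))*(x*(y*y))) * ((z*(y*y))*(z*(y*y))) = 1 := by
    calc ((x*(y*y))*(x*(y*y))) * ((z*(y*y))*(z*(y*y)))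
        = (x*(y*y)) * ((x*(y*y))*(z*(y*y))) * (z*(y*y)) := by group
    _ = (x*(y*y)) * ((z*(y*y))*(x*(y*y))) * (z*(y*y)) := by rw [hcomm]
    _ = ((x*(y*y))*(z*(y*y))) * ((x*(y*y))*(z*(y*y))) := by group
    _ = 1 := hpqpq
  -- q⁻² = p²
  have hq2 : (z*(y*y))⁻¹*(z*(y*y))⁻¹ = (x*(y*y))*(x*(y*y)) := by
    have h' : (x*(y*y))*(x*(y*y)) = ((z*(y*y))*(z*(y*y)))⁻¹ :=
      eq_inv_of_mul_eq_one_left hp2q2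
    rw [h']; group
  -- z⁻² = y x² y
  have hz2 : z⁻¹*z⁻¹ = y*(x*x)*y := by
    calc z⁻¹*z⁻¹ = y*x*1*x⁻¹*y⁻¹*z⁻¹*z⁻¹ := by group
    _ = y*x*(x*y*z^2*y*x)*x⁻¹*y⁻¹*z⁻¹*z⁻¹ := by rw [h5]
    _ = y*(x*x)*y := by rw [pow_two]; group
  -- p² = x² z⁻²
  have hp2 : (x*(y*y))*(x*(y*y)) = x*x*(z⁻¹*z⁻¹) := by
    calc (x*(y*y))*(x*(y*y)) = x*y*(y*x*y)*y := by group
    _ = x*y*(x*y*x)*y := by rw [← h2]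
    _ = x*(y*x*y)*(x*y) := by group
    _ = x*(x*y*x)*(x*y) := by rw [← h2]
    _ = x*x*(y*(x*x)*y) := by group
    _ = x*x*(z⁻¹*z⁻¹) := by rw [← hz2]
  -- a² = p²
  have ha2p : (x*z⁻¹)*(x*z⁻¹) = (x*(y*y))*(x*(y*y)) := by
    calc (x*z⁻¹)*(x*z⁻¹) = x*(z⁻¹*x)*z⁻¹ := by group
    _ = x*(x*z⁻¹)*z⁻¹ := by rw [hzx]
    _ = x*x*(z⁻¹*z⁻¹) := by group
    _ = (x*(y*y))*(x*(y*y)) := hp2.symm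
  -- q⁻¹ p q = p
  have hqpq : (z*(y*y))⁻¹*(x*(y*y))*(z*(y*y)) = x*(y*y) := by
    calc (z*(y*y))⁻¹*(x*(y*y))*(z*(y*y))
        = (z*(y*y))⁻¹*((x*(y*y))*(z*(y*y))) := by group
    _ = (z*(y*y))⁻¹*((z*(y*y))*(x*(y*y))) := by rw [hcomm]
    _ = x*(y*y) := by group
  -- a² = p⁴
  have ha2p4 : (x*z⁻¹)*(x*z⁻¹) =
      ((x*(y*y))*(x*(y*y))) * ((x*(y*y))*(x*(y*y))) := by
    calc (x*z⁻¹)*(x*z⁻¹)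
        = (x*(y*y))*((z*(y*y))⁻¹*(x*(y*y))*(z*(y*y)))*((z*(y*y))⁻¹*(z*(y*y))⁻¹) := by group
    _ = (x*(y*y))*(x*(y*y))*((z*(y*y))⁻¹*(z*(y*y))⁻¹) := by rw [hqpq]
    _ = (x*(y*y))*(x*(y*y))*((x*(y*y))*(x*(y*y))) := by rw [hq2]
    _ = ((x*(y*y))*(x*(y*y))) * ((x*(y*y))*(x*(y*y))) := by group
  -- p² = 1
  have hp2one : (x*(y*y))*(x*(y*y)) = 1 := by
    have h := ha2p.symm.trans ha2p4
    have h' : ((x*(y*y))*(x*(y*y))) * 1 =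
        ((x*(y*y))*(x*(y*y))) * ((x*(y*y))*(x*(y*y))) := by
      rw [mul_one]; exact h
    exact (mul_left_cancel h').symm
  -- a² = 1
  have ha2 : (x*z⁻¹)*(x*z⁻¹) = 1 := ha2p.trans hp2one
  -- x² = z²
  have hx2z2 : x*x = z*z := by
    calc x*x = x*x*(z⁻¹*z⁻¹)*(z*z) := by group
    _ = ((x*(y*y))*(x*(y*y)))*(z*z) := by rw [← hp2]
    _ = 1*(z*z) := by rw [hp2one]
    _ = z*z := by group
  -- b² = 1
  have hb2 : (y*x*z⁻¹*y⁻¹)*(y*x*z⁻¹*y⁻¹) = 1 := by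
    calc (y*x*z⁻¹*y⁻¹)*(y*x*z⁻¹*y⁻¹) = y*((x*z⁻¹)*(x*z⁻¹))*y⁻¹ := by group
    _ = y*1*y⁻¹ := by rw [ha2]
    _ = 1 := by group
  -- conjugation lemmas
  have hy_z : y⁻¹*z*y = z*y*z⁻¹ := by
    have h := calc z*y*z⁻¹ = y⁻¹*(y*z*y)*z⁻¹ := by group
      _ = y⁻¹*(z*y*z)*z⁻¹ := by rw [← h3]
      _ = y⁻¹*z*y := by group
    exact h.symm
  have hyx : y*x⁻¹*y⁻¹ = x⁻¹*y⁻¹*x := by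
    have hyxy : y*x*y⁻¹ = x⁻¹*y*x := by
      calc y*x*y⁻¹ = x⁻¹*(x*y*x)*y⁻¹ := by group
      _ = x⁻¹*(y*x*y)*y⁻¹ := by rw [h2]
      _ = x⁻¹*y*x := by group
    calc y*x⁻¹*y⁻¹ = (y*x*y⁻¹)⁻¹ := by group
    _ = (x⁻¹*y*x)⁻¹ := by rw [hyxy]
    _ = x⁻¹*y⁻¹*x := by group
  have hzinv2 : z⁻¹*z⁻¹ = x⁻¹*x⁻¹ := by
    calc z⁻¹*z⁻¹ = (z*z)⁻¹ := by group
    _ = (x*x)⁻¹ := by rw [← hx2z2]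
    _ = x⁻¹*x⁻¹ := by group
  have hzxinv : z*x⁻¹ = x*z⁻¹ := by
    calc z*x⁻¹ = x⁻¹*(x*z)*x⁻¹ := by group
    _ = x⁻¹*(z*x)*x⁻¹ := by rw [h1]
    _ = x⁻¹*(z*z)*z⁻¹ := by group
    _ = x⁻¹*(x*x)*z⁻¹ := by rw [← hx2z2]
    _ = x*z⁻¹ := by group
  -- key: z b = b x
  have hzb : z*(y*x*z⁻¹*y⁻¹) = (y*x*z⁻¹*y⁻¹)*x := by
    calc z*(y*x*z⁻¹*y⁻¹) = y*(y⁻¹*z*y)*x*z⁻¹*y⁻¹ := by group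
    _ = y*(z*y*z⁻¹)*x*z⁻¹*y⁻¹ := by rw [hy_z]
    _ = y*z*y*(z⁻¹*x)*z⁻¹*y⁻¹ := by group
    _ = y*z*y*(x*z⁻¹)*z⁻¹*y⁻¹ := by rw [hzx]
    _ = y*z*(y*x)*(z⁻¹*z⁻¹)*y⁻¹ := by group
    _ = y*z*(y*x)*(x⁻¹*x⁻¹)*y⁻¹ := by rw [hzinv2]
    _ = y*z*(y*x⁻¹*y⁻¹) := by group
    _ = y*z*(x⁻¹*y⁻¹*x) := by rw [hyx]
    _ = y*(z*x⁻¹)*y⁻¹*x := by group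
    _ = y*(x*z⁻¹)*y⁻¹*x := by rw [hzxinv]
    _ = (y*x*z⁻¹*y⁻¹)*x := by group
  -- a b = x b x⁻¹
  have hab' : x*(y*x*z⁻¹*y⁻¹)*x⁻¹ = (x*z⁻¹)*(y*x*z⁻¹*y⁻¹) := by
    calc x*(y*x*z⁻¹*y⁻¹)*x⁻¹ = x*z⁻¹*(z*(y*x*z⁻¹*y⁻¹))*x⁻¹ := by group
    _ = x*z⁻¹*((y*x*z⁻¹*y⁻¹)*x)*x⁻¹ := by rw [hzb]
    _ = (x*z⁻¹)*(y*x*z⁻¹*y⁻¹) := by group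
  have hab : (x*z⁻¹)*(y*x*z⁻¹*y⁻¹) = x*(y*x*z⁻¹*y⁻¹)*x⁻¹ := hab'.symm
  -- (ab)² = 1
  have habsq : ((x*z⁻¹)*(y*x*z⁻¹*y⁻¹)) * ((x*z⁻¹)*(y*x*z⁻¹*y⁻¹)) = 1 := by
    rw [hab]
    calc (x*(y*x*z⁻¹*y⁻¹)*x⁻¹) * (x*(y*x*z⁻¹*y⁻¹)*x⁻¹)
        = x*((y*x*z⁻¹*y⁻¹)*(y*x*z⁻¹*y⁻¹))*x⁻¹ := by group
    _ = x*1*x⁻¹ := by rw [hb2]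
    _ = 1 := by group
  -- commutation
  have hainv : (x*z⁻¹)⁻¹ = x*z⁻¹ := inv_eq_of_mul_eq_one_right ha2
  have hbinv : (y*x*z⁻¹*y⁻¹)⁻¹ = y*x*z⁻¹*y⁻¹ := inv_eq_of_mul_eq_one_right hb2
  have hcab : (x*z⁻¹)*(y*x*z⁻¹*y⁻¹) = (y*x*z⁻¹*y⁻¹)*(x*z⁻¹) := by
    calc (x*z⁻¹)*(y*x*z⁻¹*y⁻¹)
        = ((x*z⁻¹)*(y*x*z⁻¹*y⁻¹))⁻¹ := (inv_eq_of_mul_eq_one_right habsq).symm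
    _ = (y*x*z⁻¹*y⁻¹)⁻¹*(x*z⁻¹)⁻¹ := by group
    _ = (y*x*z⁻¹*y⁻¹)*(x*z⁻¹) := by rw [hainv, hbinv]
  exact ⟨ha2, hb2, hcab⟩

theorem stmt6 : ea ^ 2 = 1 ∧ eb ^ 2 = 1 ∧ ea * eb = eb * ea := by
  have hrel : ∀ r ∈ m4Rels, (PresentedGroup.mk m4Rels) r = 1 := fun r hr =>
    (QuotientGroup.eq_one_iff r).mpr (Subgroup.subset_normalClosure hr)
  have h1 : m4s1*m4s3 = m4s3*m4s1 := by
    have h := hrel _ (Set.mem_insert _ _)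
    simp only [map_mul, map_inv] at h
    exact mul_inv_eq_one.mp h
  have h2 : m4s1*m4s2*m4s1 = m4s2*m4s1*m4s2 := by
    have h := hrel _ (Set.mem_insert_of_mem _ (Set.mem_insert _ _))
    simp only [map_mul, map_inv] at h
    exact mul_inv_eq_one.mp h
  have h3 : m4s3*m4s2*m4s3 = m4s2*m4s3*m4s2 := by
    have h := hrel _
      (Set.mem_insert_of_mem _ (Set.mem_insert_of_mem _ (Set.mem_insert _ _)))
    simp only [map_mul, map_inv] at h
    exact mul_inv_eq_one.mp h
  have h4 : (m4s1*m4s2*m4s3)^4 = 1 := by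
    have h := hrel _ (Set.mem_insert_of_mem _ (Set.mem_insert_of_mem _
      (Set.mem_insert_of_mem _ (Set.mem_insert _ _))))
    simp only [map_mul, map_pow] at h
    exact h
  have h5 : m4s1*m4s2*m4s3^2*m4s2*m4s1 = 1 := by
    have h := hrel _ (Set.mem_insert_of_mem _ (Set.mem_insert_of_mem _
      (Set.mem_insert_of_mem _ (Set.mem_insert_of_mem _ rfl))))
    simp only [map_mul, map_pow] at h
    exact h
  obtain ⟨ka, kb, kab⟩ := m4_main m4s1 m4s2 m4s3 h1 h2 h3 h4 h5
  refine ⟨?_, ?_, ?_⟩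
  · rw [pow_two]; exact ka
  · rw [pow_two]; exact kb
  · exact kab
end

section
/- The group M04 is the internal semidirect product of the normal subgroup N and the subgroup G: the subgroup N is normal in M04, N ∩ G = {1}, and every element of M04 is a product of an element of N and an element of G. -/
local notation "s" => m4s1
local notation "t" => m4s2
local notation "u" => m4s3

lemma rel_one {r : FreeGroup (Fin 3)} (hr : r ∈ m4Rels) : PresentedGroup.mk m4Rels r = 1 :=
  (QuotientGroup.eq_one_iff r).2 (Subgroup.subset_normalClosure hr)

lemma h1 : s * u = u * s := by
  have := rel_one (r := FreeGroup.of 0 * FreeGroup.of 2 * (FreeGroup.of 2 * FreeGroup.of 0)⁻¹)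
    (by simp [m4Rels])
  simp only [map_mul, map_inv] at this
  exact mul_inv_eq_one.mp this

lemma h2 : s * t * s = t * s * t := by
  have := rel_one (r := FreeGroup.of 0 * FreeGroup.of 1 * FreeGroup.of 0 *
      (FreeGroup.of 1 * FreeGroup.of 0 * FreeGroup.of 1)⁻¹) (by simp [m4Rels])
  simp only [map_mul, map_inv] at this
  exact mul_inv_eq_one.mp this

lemma h3 : u * t * u = t * u * t := by
  have := rel_one (r := FreeGroup.of 2 * FreeGroup.of 1 * FreeGroup.of 2 *
      (FreeGroup.of 1 * FreeGroup.of 2 * FreeGroup.of 1)⁻¹) (by simp [m4Rels])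
  simp only [map_mul, map_inv] at this
  exact mul_inv_eq_one.mp this

lemma h4 : (s * t * u) ^ 4 = 1 := by
  have := rel_one (r := (FreeGroup.of 0 * FreeGroup.of 1 * FreeGroup.of 2) ^ 4) (by simp [m4Rels])
  simp only [map_mul, map_pow] at this; exact this

def cc : M04 := m4s1 * m4s2 * m4s3
def dd : M04 := cc * cc

lemma h5' : m4s1 * m4s2 * m4s3 ^ 2 * m4s2 * m4s1 = 1 := by
  have := rel_one (r := FreeGroup.of 0 * FreeGroup.of 1 * FreeGroup.of 2 ^ 2 * FreeGroup.of 1 *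
      FreeGroup.of 0) (by simp [m4Rels])
  simp only [map_mul, map_pow] at this; exact this

lemma com_su : Commute m4s1 m4s3 := h1

lemma l_hcc : cc = s⁻¹ * t⁻¹ * u⁻¹ := by
  have h : (s * t * u) * (u * t * s) = 1 := by
    have := h5'
    calc (s * t * u) * (u * t * s) = s * t * u ^ 2 * t * s := by rw [pow_two]; group
    _ = 1 := h5'
  have h2 := inv_eq_of_mul_eq_one_right h
  show s * t * u = _
  rw [← inv_inv (s * t * u), h2]
  group

lemma l_e1 : cc * s = t * cc := by
  show (s * t * u) * s = t * (s * t * u)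
  calc (s * t * u) * s = (s * t) * (s * u) := by rw [mul_assoc, ← h1]
  _ = (s * t * s) * u := by group
  _ = (t * s * t) * u := by rw [h2]
  _ = t * (s * t * u) := by group

lemma l_e2 : cc * t = u * cc := by
  show (s * t * u) * t = u * (s * t * u)
  calc (s * t * u) * t = s * (t * u * t) := by group
  _ = s * (u * t * u) := by rw [h3]
  _ = (s * u) * (t * u) := by group
  _ = (u * s) * (t * u) := by rw [h1]
  _ = u * (s * t * u) := by group

lemma l_hd : dd * dd = 1 := by
  show (cc * cc) * (cc * cc) = 1
  rw [show cc = s * t * u from rfl]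
  calc (s*t*u) * (s*t*u) * ((s*t*u) * (s*t*u)) = (s*t*u)^4 := by
        rw [pow_succ, pow_succ, pow_succ, pow_one]; group
  _ = 1 := h4

lemma l_ddinv : dd⁻¹ = dd := by
  rw [inv_eq_iff_mul_eq_one]; exact l_hd


lemma hsts : s*t*s⁻¹ = t⁻¹*(s*t) := by
  have h := congrArg (fun x => t⁻¹ * x * s⁻¹) h2
  simpa [mul_assoc] using h.symm

lemma h3i : u⁻¹*t⁻¹*u⁻¹ = t⁻¹*u⁻¹*t⁻¹ := by
  have h := congrArg (·⁻¹) h3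
  simpa [mul_assoc] using h

lemma hutu : u*t⁻¹*u⁻¹ = t⁻¹*(u⁻¹*t) := by
  have h := congrArg (fun x => u * x * t) h3i
  simpa [mul_assoc] using h.symm

lemma l_e5 : dd = t⁻¹ * ea * t := by
  show cc * cc = _
  nth_rewrite 2 [l_hcc]
  rw [show cc = s * t * u from rfl, show ea = s * u⁻¹ from rfl]
  calc (s*t*u) * (s⁻¹*t⁻¹*u⁻¹) = (s*t) * (u*s⁻¹) * (t⁻¹*u⁻¹) := by group
  _ = (s*t) * (s⁻¹*u) * (t⁻¹*u⁻¹) := by rw [com_su.inv_left.eq]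
  _ = (s*t*s⁻¹) * (u*t⁻¹*u⁻¹) := by group
  _ = (t⁻¹*(s*t)) * (t⁻¹*(u⁻¹*t)) := by rw [hsts, hutu]
  _ = t⁻¹ * (s*u⁻¹) * t := by group

lemma l_ea2 : ea * ea = 1 := by
  have h := l_hd
  rw [l_e5] at h
  have h' := congrArg (fun x => t * x * t⁻¹) h
  simpa [mul_assoc] using h'

lemma l_eainv : ea⁻¹ = ea := by rw [inv_eq_iff_mul_eq_one]; exact l_ea2

lemma l_e7 : s * s = u * u := by
  have h : s * u⁻¹ * (s * u⁻¹) = 1 := l_ea2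
  have h2 : s * (s * (u⁻¹ * u⁻¹)) = 1 := by
    calc s * (s * (u⁻¹ * u⁻¹)) = s * (s * u⁻¹ * u⁻¹) := by group
    _ = s * (u⁻¹ * s * u⁻¹) := by rw [com_su.inv_right.eq]
    _ = s * u⁻¹ * (s * u⁻¹) := by group
    _ = 1 := h
  have := congrArg (fun x => x * (u * u)) h2
  simpa [mul_assoc] using this

lemma l_e8 : dd * (t * t) = (t * t) * dd := by
  show (cc * cc) * (t*t) = (t*t) * (cc*cc)
  calc (cc * cc) * (t*t) = cc * (cc * t) * t := by group
  _ = cc * (u * cc) * t := by rw [l_e2]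
  _ = cc * u * (cc * t) := by group
  _ = cc * u * (u * cc) := by rw [l_e2]
  _ = cc * (u * u) * cc := by group
  _ = cc * (s * s) * cc := by rw [l_e7]
  _ = (cc * s) * s * cc := by group
  _ = (t * cc) * s * cc := by rw [l_e1]
  _ = t * (cc * s) * cc := by group
  _ = t * (t * cc) * cc := by rw [l_e1]
  _ = (t*t) * (cc*cc) := by group

lemma l_e9 : eb = dd := by
  have hea : ea = t * dd * t⁻¹ := by rw [l_e5]; group
  have : eb = t * ea * t⁻¹ := by rw [show eb = t*s*u⁻¹*t⁻¹ from rfl, show ea = s*u⁻¹ from rfl]; group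
  rw [this, hea]
  calc t * (t * dd * t⁻¹) * t⁻¹ = (t*t) * dd * (t*t)⁻¹ := by group
  _ = dd * (t*t) * (t*t)⁻¹ := by rw [← l_e8]
  _ = dd := by group

lemma cj_t_a : t * ea * t⁻¹ = eb := by
  rw [show eb = t*s*u⁻¹*t⁻¹ from rfl, show ea = s*u⁻¹ from rfl]; group

lemma cj_ti_b : t⁻¹ * eb * t = ea := by rw [← cj_t_a]; group

lemma cj_ti_a : t⁻¹ * ea * t = eb := by rw [l_e9, ← l_e5]

lemma cj_t_b : t * eb * t⁻¹ = ea := by rw [← cj_ti_a]; group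

lemma cj_s_a : s * ea * s⁻¹ = ea := by
  rw [show ea = s*u⁻¹ from rfl]
  calc s * (s * u⁻¹) * s⁻¹ = s * (s * u⁻¹ * s⁻¹) := by group
  _ = s * (u⁻¹ * s * s⁻¹) := by rw [com_su.inv_right.eq]
  _ = s * u⁻¹ := by group

lemma com_sa : Commute m4s1 ea := by
  have h := congrArg (fun x => x * s) cj_s_a
  show s * ea = ea * s
  simpa [mul_assoc] using h

lemma cj_si_a : s⁻¹ * ea * s = ea := by
  calc s⁻¹ * ea * s = (s⁻¹ * ea) * s := rfl
  _ = (ea * s⁻¹) * s := by rw [com_sa.inv_left.eq]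
  _ = ea := by group

lemma l_scc : s * cc = t⁻¹ * u⁻¹ := by rw [l_hcc]; group

lemma l_ccsi : cc * s⁻¹ = t⁻¹ * cc := by
  have h := congrArg (fun x => t⁻¹ * x * s⁻¹) l_e1
  simpa [mul_assoc] using h.symm
lemma cj_s_b : s * eb * s⁻¹ = ea * eb := by
  have target : ea * eb = (u⁻¹*(t⁻¹*u⁻¹)) * cc := by
    rw [show ea = s*u⁻¹ from rfl, l_e9, show dd = cc*cc from rfl]
    nth_rewrite 1 [l_hcc]
    calc (s*u⁻¹) * ((s⁻¹*t⁻¹*u⁻¹)*cc) = (s*(u⁻¹*s⁻¹)*(t⁻¹*u⁻¹))*cc := by group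
    _ = (s*(s⁻¹*u⁻¹)*(t⁻¹*u⁻¹))*cc := by rw [← com_su.inv_left.inv_right.eq]
    _ = (u⁻¹*(t⁻¹*u⁻¹))*cc := by group
  rw [target, l_e9, show dd = cc*cc from rfl]
  calc s * (cc*cc) * s⁻¹ = (s * cc) * (cc * s⁻¹) := by group
  _ = (t⁻¹*u⁻¹) * (t⁻¹*cc) := by rw [l_scc, l_ccsi]
  _ = (t⁻¹*u⁻¹*t⁻¹) * cc := by group
  _ = (u⁻¹*t⁻¹*u⁻¹) * cc := by rw [← h3i]
  _ = (u⁻¹*(t⁻¹*u⁻¹)) * cc := by group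

lemma cj_si_b : s⁻¹ * eb * s = ea * eb := by
  have key : s * (ea * eb) * s⁻¹ = eb := by
    calc s * (ea * eb) * s⁻¹ = (s*ea*s⁻¹) * (s*eb*s⁻¹) := by group
    _ = ea * (ea * eb) := by rw [cj_s_a, cj_s_b]
    _ = (ea * ea) * eb := by group
    _ = eb := by rw [l_ea2, one_mul]
  conv_lhs => rw [← key]
  group

lemma l_eb2 : eb * eb = 1 := by
  have h : eb * eb = t * (ea * ea) * t⁻¹ := by
    conv_lhs => rw [← cj_t_a]
    group
  rw [h, l_ea2]; group

lemma l_ebinv : eb⁻¹ = eb := by rw [inv_eq_iff_mul_eq_one]; exact l_eb2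

lemma l_dds : dd * s * dd⁻¹ = u := by
  rw [l_ddinv, show dd = cc*cc from rfl]
  calc (cc*cc) * s * (cc*cc) = cc * (cc * s) * (cc * cc) := by group
  _ = cc * (t * cc) * (cc * cc) := by rw [l_e1]
  _ = (cc * t) * (cc * (cc * cc)) := by group
  _ = (u * cc) * (cc * (cc * cc)) := by rw [l_e2]
  _ = u * ((cc*cc) * (cc*cc)) := by group
  _ = u := by
      have := l_hd
      rw [show dd = cc*cc from rfl] at this
      rw [this, mul_one]

lemma l_ddu : dd * u * dd⁻¹ = s := by
  conv_lhs => rw [← l_dds]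
  rw [l_ddinv]
  calc dd * (dd * s * dd) * dd = (dd*dd) * s * (dd*dd) := by group
  _ = s := by rw [l_hd]; group

lemma l_dds' : dd * s = u * dd := by
  have h := l_dds
  rw [l_ddinv] at h
  have h2 := congrArg (fun x => x * dd) h
  simpa [mul_assoc, l_hd, mul_one] using h2

lemma l_ddu' : dd * u = s * dd := by
  have h := l_ddu
  rw [l_ddinv] at h
  have h2 := congrArg (fun x => x * dd) h
  simpa [mul_assoc, l_hd, mul_one] using h2

lemma hu'dd : u⁻¹ * dd = dd * s⁻¹ := by
  have h := congrArg (fun x => u⁻¹ * x * s⁻¹) l_dds'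
  simpa [mul_assoc] using h

lemma cj_b_a : eb * ea * eb⁻¹ = ea := by
  rw [l_e9, l_ddinv, show ea = s*u⁻¹ from rfl]
  calc dd * (s*u⁻¹) * dd = (dd*s)*(u⁻¹*dd) := by group
  _ = (u*dd)*(dd*s⁻¹) := by rw [l_dds', hu'dd]
  _ = u*(dd*dd)*s⁻¹ := by group
  _ = u*s⁻¹ := by rw [l_hd]; group
  _ = s*u⁻¹ := by
      have h : u*s⁻¹ = (s*u⁻¹)⁻¹ := by group
      rw [h, show s*u⁻¹ = ea from rfl, l_eainv]

lemma comm_ab : ea * eb = eb * ea := by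
  have h := congrArg (fun x => x * eb) cj_b_a
  rw [l_ebinv] at h
  calc ea * eb = eb * ea * (eb * eb) := by simpa [mul_assoc] using h.symm
  _ = eb * ea := by rw [l_eb2, mul_one]

lemma ea_mem : ea ∈ Nsub := Subgroup.subset_closure (Set.mem_insert _ _)
lemma eb_mem : eb ∈ Nsub := Subgroup.subset_closure (Set.mem_insert_of_mem _ rfl)
lemma s_mem : m4s1 ∈ Gsub := Subgroup.subset_closure (Set.mem_insert _ _)
lemma t_mem : m4s2 ∈ Gsub := Subgroup.subset_closure (Set.mem_insert_of_mem _ rfl)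

lemma u_eq : ea⁻¹ * m4s1 = m4s3 := by rw [show ea = s*u⁻¹ from rfl]; group

lemma conj_mem_N {g : M04} (hga : g * ea * g⁻¹ ∈ Nsub) (hgb : g * eb * g⁻¹ ∈ Nsub) :
    ∀ n ∈ Nsub, g * n * g⁻¹ ∈ Nsub := by
  intro n hn
  induction hn using Subgroup.closure_induction with
  | mem x hx =>
    rcases hx with rfl | hx
    · exact hga
    · rcases hx with rfl; exact hgb
  | one => simpa using Nsub.one_mem
  | mul x y _ _ hx hy =>
    have h : g * (x * y) * g⁻¹ = (g * x * g⁻¹) * (g * y * g⁻¹) := by group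
    rw [h]; exact Nsub.mul_mem hx hy
  | inv x _ hx =>
    have h : g * x⁻¹ * g⁻¹ = (g * x * g⁻¹)⁻¹ := by group
    rw [h]; exact Nsub.inv_mem hx

def Qprop (g : M04) : Prop :=
  (∀ n ∈ Nsub, g * n * g⁻¹ ∈ Nsub) ∧ (∀ n ∈ Nsub, g⁻¹ * n * g ∈ Nsub)

lemma Q_mul {g1 g2 : M04} (h1 : Qprop g1) (h2 : Qprop g2) : Qprop (g1 * g2) := by
  constructor
  · intro n hn
    have h : g1 * g2 * n * (g1 * g2)⁻¹ = g1 * (g2 * n * g2⁻¹) * g1⁻¹ := by group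
    rw [h]; exact h1.1 _ (h2.1 n hn)
  · intro n hn
    have h : (g1 * g2)⁻¹ * n * (g1 * g2) = g2⁻¹ * (g1⁻¹ * n * g1) * g2 := by group
    rw [h]; exact h2.2 _ (h1.2 n hn)

lemma Q_inv {g : M04} (h : Qprop g) : Qprop g⁻¹ := by
  refine ⟨fun n hn => ?_, fun n hn => ?_⟩
  · simpa [inv_inv] using h.2 n hn
  · simpa [inv_inv] using h.1 n hn

lemma Q_of_mem_N {g : M04} (hg : g ∈ Nsub) : Qprop g :=
  ⟨fun n hn => Nsub.mul_mem (Nsub.mul_mem hg hn) (Nsub.inv_mem hg),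
   fun n hn => Nsub.mul_mem (Nsub.mul_mem (Nsub.inv_mem hg) hn) hg⟩

lemma Q_s : Qprop m4s1 := by
  constructor
  · exact conj_mem_N (by rw [cj_s_a]; exact ea_mem)
      (by rw [cj_s_b]; exact Nsub.mul_mem ea_mem eb_mem)
  · have := conj_mem_N (g := (m4s1)⁻¹) ?_ ?_
    · intro n hn; simpa using this n hn
    · have h : s⁻¹ * ea * (s⁻¹)⁻¹ = s⁻¹ * ea * s := by group
      rw [h, cj_si_a]; exact ea_mem
    · have h : s⁻¹ * eb * (s⁻¹)⁻¹ = s⁻¹ * eb * s := by group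
      rw [h, cj_si_b]; exact Nsub.mul_mem ea_mem eb_mem

lemma Q_t : Qprop m4s2 := by
  constructor
  · exact conj_mem_N (by rw [cj_t_a]; exact eb_mem) (by rw [cj_t_b]; exact ea_mem)
  · have := conj_mem_N (g := (m4s2)⁻¹) ?_ ?_
    · intro n hn; simpa using this n hn
    · have h : t⁻¹ * ea * (t⁻¹)⁻¹ = t⁻¹ * ea * t := by group
      rw [h, cj_ti_a]; exact eb_mem
    · have h : t⁻¹ * eb * (t⁻¹)⁻¹ = t⁻¹ * eb * t := by group
      rw [h, cj_ti_b]; exact ea_mem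

lemma Q_u : Qprop m4s3 := by
  have h := Q_mul (Q_inv (Q_of_mem_N ea_mem)) Q_s
  rwa [u_eq] at h

lemma top_gen : Subgroup.closure ({m4s1, m4s2, m4s3} : Set M04) = ⊤ := by
  have hr : (Set.range (PresentedGroup.of : Fin 3 → M04)) = {m4s1, m4s2, m4s3} := by
    ext x
    simp only [Set.mem_range, Set.mem_insert_iff, Set.mem_singleton_iff]
    constructor
    · rintro ⟨i, rfl⟩
      fin_cases i
      · exact Or.inl rfl
      · exact Or.inr (Or.inl rfl)
      · exact Or.inr (Or.inr rfl)
    · rintro (rfl | rfl | rfl)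
      exacts [⟨0, rfl⟩, ⟨1, rfl⟩, ⟨2, rfl⟩]
  rw [← hr, PresentedGroup.closure_range_of]

lemma Q_all (g : M04) : Qprop g := by
  have hg : g ∈ Subgroup.closure ({m4s1, m4s2, m4s3} : Set M04) := by
    rw [top_gen]; trivial
  induction hg using Subgroup.closure_induction with
  | mem x hx =>
    rcases hx with rfl | rfl | rfl
    exacts [Q_s, Q_t, Q_u]
  | one => exact ⟨fun n hn => by simpa using hn, fun n hn => by simpa using hn⟩
  | mul x y _ _ hx hy => exact Q_mul hx hy
  | inv x _ hx => exact Q_inv hx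

lemma N_normal : Nsub.Normal := ⟨fun n hn g => (Q_all g).1 n hn⟩

def fperm : Fin 3 → Equiv.Perm (Fin 4) := ![Equiv.swap 0 1, Equiv.swap 1 2, Equiv.swap 2 3]

lemma frels : ∀ r ∈ m4Rels, FreeGroup.lift fperm r = 1 := by
  intro r hr
  simp only [m4Rels, Set.mem_insert_iff, Set.mem_singleton_iff] at hr
  rcases hr with rfl | rfl | rfl | rfl | rfl <;>
    simp only [map_mul, map_inv, map_pow, FreeGroup.lift_apply_of, fperm] <;> decide

def φ : M04 →* Equiv.Perm (Fin 4) := PresentedGroup.toGroup frels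

lemma φ_s : φ m4s1 = Equiv.swap 0 1 := PresentedGroup.toGroup.of frels
lemma φ_t : φ m4s2 = Equiv.swap 1 2 := PresentedGroup.toGroup.of frels
lemma φ_u : φ m4s3 = Equiv.swap 2 3 := PresentedGroup.toGroup.of frels

lemma φ_ea : φ ea = Equiv.swap 0 1 * (Equiv.swap 2 3)⁻¹ := by
  rw [show ea = s * u⁻¹ from rfl, map_mul, map_inv, φ_s, φ_u]

lemma φ_eb : φ eb = Equiv.swap 1 2 * Equiv.swap 0 1 * (Equiv.swap 2 3)⁻¹ * (Equiv.swap 1 2)⁻¹ := by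
  rw [show eb = t * s * u⁻¹ * t⁻¹ from rfl, map_mul, map_mul, map_mul, map_inv, map_inv,
    φ_s, φ_t, φ_u]

lemma G_fix : ∀ x ∈ Gsub, φ x 3 = 3 := by
  intro x hx
  induction hx using Subgroup.closure_induction with
  | mem y hy =>
    rcases hy with rfl | rfl
    · rw [φ_s]; decide
    · rw [φ_t]; decide
  | one => simp
  | mul y z _ _ hy hz => rw [map_mul, Equiv.Perm.mul_apply, hz, hy]
  | inv y _ hy =>
    rw [map_inv]
    conv_lhs => rw [← hy]
    exact Equiv.symm_apply_apply (φ y) 3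

lemma m_a_ab : ea * (ea * eb) = eb := by rw [← mul_assoc, l_ea2, one_mul]
lemma m_b_ab : eb * (ea * eb) = ea := by
  rw [← mul_assoc, ← comm_ab, mul_assoc, l_eb2, mul_one]
lemma m_ab_a : (ea * eb) * ea = eb := by
  rw [mul_assoc, ← comm_ab, ← mul_assoc, l_ea2, one_mul]
lemma m_ab_b : (ea * eb) * eb = ea := by rw [mul_assoc, l_eb2, mul_one]
lemma m_ab_ab : (ea * eb) * (ea * eb) = 1 := by rw [mul_assoc, m_b_ab, l_ea2]
lemma m_ab_inv : (ea * eb)⁻¹ = ea * eb := by rw [inv_eq_iff_mul_eq_one]; exact m_ab_ab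

lemma N_cases : ∀ x ∈ Nsub, x = 1 ∨ x = ea ∨ x = eb ∨ x = ea * eb := by
  intro x hx
  induction hx using Subgroup.closure_induction with
  | mem y hy =>
    rcases hy with rfl | rfl
    · exact Or.inr (Or.inl rfl)
    · exact Or.inr (Or.inr (Or.inl rfl))
  | one => exact Or.inl rfl
  | mul y z _ _ hy hz =>
    rcases hy with rfl | rfl | rfl | rfl <;> rcases hz with rfl | rfl | rfl | rfl <;>
      simp only [one_mul, mul_one, l_ea2, l_eb2, m_a_ab, m_b_ab, m_ab_a, m_ab_b, m_ab_ab,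
        ← comm_ab] <;> tauto
  | inv y _ hy =>
    rcases hy with rfl | rfl | rfl | rfl <;>
      simp only [inv_one, l_eainv, l_ebinv, m_ab_inv] <;> tauto

lemma inf_bot : Nsub ⊓ Gsub = ⊥ := by
  rw [eq_bot_iff]
  rintro x ⟨hxN, hxG⟩
  have hfix := G_fix x hxG
  rcases N_cases x hxN with rfl | rfl | rfl | rfl
  · exact Subgroup.mem_bot.mpr rfl
  · rw [φ_ea] at hfix; exact absurd hfix (by decide)
  · rw [φ_eb] at hfix; exact absurd hfix (by decide)
  · rw [map_mul, φ_ea, φ_eb] at hfix; exact absurd hfix (by decide)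

lemma sup_top : Nsub ⊔ Gsub = ⊤ := by
  rw [eq_top_iff, ← top_gen]
  rw [Subgroup.closure_le]
  rintro x (rfl | rfl | rfl)
  · exact SetLike.mem_coe.mpr (Subgroup.mem_sup_right s_mem)
  · exact SetLike.mem_coe.mpr (Subgroup.mem_sup_right t_mem)
  · exact SetLike.mem_coe.mpr (by
      rw [← u_eq]
      exact Subgroup.mul_mem _ (Subgroup.mem_sup_left (Nsub.inv_mem ea_mem))
        (Subgroup.mem_sup_right s_mem))

lemma decomp : ∀ x : M04, ∃ n ∈ Nsub, ∃ g ∈ Gsub, x = n * g := by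
  intro x
  haveI : Nsub.Normal := N_normal
  have hx : x ∈ ((Nsub ⊔ Gsub : Subgroup M04) : Set M04) := by
    rw [sup_top]; trivial
  rw [Subgroup.normal_mul] at hx
  obtain ⟨n, hn, g, hg, rfl⟩ := hx
  exact ⟨n, hn, g, hg, rfl⟩

theorem stmt7 :
    Nsub.Normal ∧ Nsub ⊓ Gsub = ⊥ ∧
    ∀ x : M04, ∃ n ∈ Nsub, ∃ g ∈ Gsub, x = n * g :=
  ⟨N_normal, inf_bot, decomp⟩
end

section
/- For every A ∈ ℂ with A ≠ 0 and A² ≠ 1, the matrices QS(A) and QT(A) satisfy QS(A)³ = −1 and QT(A)² = −1 (where 1 denotes the 2×2 identity matrix). -/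
/-- The matrix `QS(A) = (A² − 1)⁻¹ · !![−1, −A²; (A² − 1)²/A² + 1, A²]`. -/
noncomputable def QS (A : ℂ) : Matrix (Fin 2) (Fin 2) ℂ :=
  (A ^ 2 - 1)⁻¹ • !![-1, -A ^ 2; (A ^ 2 - 1) ^ 2 / A ^ 2 + 1, A ^ 2]

/-- The matrix `QT(A) = (A² − 1)⁻¹ · !![−A, −A; (A² − 1)²/A + A, A]`. -/
noncomputable def QT (A : ℂ) : Matrix (Fin 2) (Fin 2) ℂ :=
  (A ^ 2 - 1)⁻¹ • !![-A, -A; (A ^ 2 - 1) ^ 2 / A + A, A]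

theorem stmt11 (A : ℂ) (h0 : A ≠ 0) (h1 : A ^ 2 ≠ 1) :
    QS A ^ 3 = -1 ∧ QT A ^ 2 = -1 := by
  have hs : A ^ 2 - 1 ≠ 0 := sub_ne_zero.mpr h1
  have hA2 : (A:ℂ) ^ 2 ≠ 0 := pow_ne_zero _ h0
  constructor
  · rw [pow_succ, pow_succ, pow_one]
    simp only [QS, Matrix.smul_mul, Matrix.mul_smul]
    ext i j
    fin_cases i <;> fin_cases j
    all_goals simp [Matrix.mul_apply, Fin.sum_univ_two, Matrix.one_apply]
    any_goals (right; field_simp)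
    all_goals (try field_simp)
    all_goals ring
  · rw [pow_succ, pow_one]
    simp only [QT, Matrix.smul_mul, Matrix.mul_smul]
    ext i j
    fin_cases i <;> fin_cases j
    all_goals simp [Matrix.mul_apply, Fin.sum_univ_two, Matrix.one_apply]
    any_goals (right; field_simp)
    all_goals (try field_simp)
    all_goals ring
end

section
/- The group homomorphism ρ : H → PGL(2,ℂ) determined by ρ(s) = [!![0, 1; −1, 1]] and ρ(t) = [!![0, 1; −1, 0]] is well defined (since !![0, 1; −1, 1]³ = −1 and !![0, 1; −1, 0]² = −1) and injective. -/
/-- `PGL(2,ℂ)`: the quotient of `GL(2,ℂ)` by its center (nonzero scalar matrices). -/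
abbrev PGL2 := GL (Fin 2) ℂ ⧸ Subgroup.center (GL (Fin 2) ℂ)

/-- The matrix `!![0, 1; −1, 0]` as an element of `GL(2,ℂ)`. -/
noncomputable def Mt0 : GL (Fin 2) ℂ :=
  Matrix.GeneralLinearGroup.mkOfDetNeZero !![0, 1; -1, 0]
    (by norm_num [Matrix.det_fin_two_of])

/-- The matrix `!![0, 1; −1, 1]` as an element of `GL(2,ℂ)`. -/
noncomputable def Ms0 : GL (Fin 2) ℂ :=
  Matrix.GeneralLinearGroup.mkOfDetNeZero !![0, 1; -1, 1]
    (by norm_num [Matrix.det_fin_two_of])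

/-! ### Auxiliary material -/

set_option synthInstance.maxHeartbeats 1000000
set_option maxHeartbeats 1000000
set_option linter.unusedTactic false
set_option linter.unreachableTactic false
set_option linter.unnecessarySeqFocus false

open LinearAlgebra.Projectivization Projectivization Matrix Pointwise

/-- The projective line over `ℂ`. -/
abbrev Pt := ℙ ℂ (Fin 2 → ℂ)

lemma mulVec_ne_zero (g : GL (Fin 2) ℂ) {v : Fin 2 → ℂ} (hv : v ≠ 0) :
    (g : Matrix (Fin 2) (Fin 2) ℂ).mulVec v ≠ 0 := by
  intro h
  apply hv
  have h2 : ((g⁻¹ : GL (Fin 2) ℂ) : Matrix (Fin 2) (Fin 2) ℂ).mulVec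
      (((g : Matrix (Fin 2) (Fin 2) ℂ)).mulVec v) = 0 := by rw [h, Matrix.mulVec_zero]
  rwa [Matrix.mulVec_mulVec, ← Units.val_mul, inv_mul_cancel, Units.val_one,
    Matrix.one_mulVec] at h2

noncomputable instance glAct : MulAction (GL (Fin 2) ℂ) Pt where
  smul g P := Quotient.map' (fun v => ⟨(g : Matrix (Fin 2) (Fin 2) ℂ).mulVec v.1, mulVec_ne_zero g v.2⟩)
    (by
      rintro ⟨v, hv⟩ ⟨w, hw⟩ ⟨a, ha⟩
      refine ⟨a, ?_⟩
      simp only [Units.smul_def] at ha ⊢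
      show (a : ℂ) • (g : Matrix (Fin 2) (Fin 2) ℂ).mulVec w = (g : Matrix (Fin 2) (Fin 2) ℂ).mulVec v
      rw [← Matrix.mulVec_smul]
      rw [ha]) P
  one_smul P := by
    induction P using Quotient.inductionOn' with
    | _ v =>
      refine Quotient.sound' ⟨1, ?_⟩
      show (1 : ℂˣ) • _ = _
      simp
  mul_smul g h P := by
    induction P using Quotient.inductionOn' with
    | _ v =>
      refine Quotient.sound' ⟨1, ?_⟩
      show (1 : ℂˣ) • _ = _
      rw [one_smul]
      show _ = ((g * h : GL (Fin 2) ℂ) : Matrix (Fin 2) (Fin 2) ℂ).mulVec v.1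
      rw [Units.val_mul, ← Matrix.mulVec_mulVec]

lemma gl_smul_mk (g : GL (Fin 2) ℂ) (v : Fin 2 → ℂ) (hv : v ≠ 0) :
    g • (Projectivization.mk ℂ v hv) =
      Projectivization.mk ℂ ((g : Matrix (Fin 2) (Fin 2) ℂ).mulVec v) (mulVec_ne_zero g hv) := rfl

lemma coe_mkOfDetNeZero {A : Matrix (Fin 2) (Fin 2) ℂ} {h} :
    ((Matrix.GeneralLinearGroup.mkOfDetNeZero A h : GL (Fin 2) ℂ) : Matrix (Fin 2) (Fin 2) ℂ) = A := rfl

lemma center_matrix_eq {z : GL (Fin 2) ℂ} (hz : z ∈ Subgroup.center (GL (Fin 2) ℂ)) :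
    (z : Matrix (Fin 2) (Fin 2) ℂ) = ((z : Matrix (Fin 2) (Fin 2) ℂ) 0 0) • 1 := by
  rw [Subgroup.mem_center_iff] at hz
  set m : Matrix (Fin 2) (Fin 2) ℂ := (z : Matrix (Fin 2) (Fin 2) ℂ) with hm
  have hu := congrArg (Units.val) (hz (Matrix.GeneralLinearGroup.mkOfDetNeZero !![1,1;0,1]
    (by norm_num [Matrix.det_fin_two_of])))
  have hl := congrArg (Units.val) (hz (Matrix.GeneralLinearGroup.mkOfDetNeZero !![1,0;1,1]
    (by norm_num [Matrix.det_fin_two_of])))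
  simp only [Units.val_mul] at hu hl
  have hu00 := congrFun (congrFun hu 0) 0
  have hu11 := congrFun (congrFun hu 1) 1
  have hl00 := congrFun (congrFun hl 0) 0
  have hl11 := congrFun (congrFun hl 1) 1
  have hu01 := congrFun (congrFun hu 0) 1
  have hl10 := congrFun (congrFun hl 1) 0
  simp [Matrix.mul_apply, Fin.sum_univ_succ, coe_mkOfDetNeZero] at hu00 hu11 hl00 hl11 hu01 hl10
  ext i j
  fin_cases i <;> fin_cases j <;> simp [Matrix.one_apply]
  all_goals first
      | rfl
      | linear_combination hu00
      | linear_combination hl00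
      | linear_combination hu11
      | linear_combination hl11
      | linear_combination hu00 - hl00
      | linear_combination hu11 - hl11
      | linear_combination hu00 + hu11
      | linear_combination hl00 + hl11
      | linear_combination hu01 + hu00
      | linear_combination hl10 + hl00
      | linear_combination hu01
      | linear_combination hl10
      | linear_combination hu01 + 2*hl11
      | linear_combination hl10 + 2*hu11

lemma center_smul_eq {z : GL (Fin 2) ℂ} (hz : z ∈ Subgroup.center (GL (Fin 2) ℂ)) (P : Pt) :
    z • P = P := by
  induction P using Quotient.inductionOn' with
  | _ v =>
    have hmat := center_matrix_eq hz
    set c : ℂ := (z : Matrix (Fin 2) (Fin 2) ℂ) 0 0 with hc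
    have hcne : c ≠ 0 := by
      intro h
      have hd : (z : Matrix (Fin 2) (Fin 2) ℂ).det ≠ 0 :=
        (Matrix.GeneralLinearGroup.det z).ne_zero
      rw [hmat, h] at hd
      simp at hd
    refine Quotient.sound' ⟨Units.mk0 c hcne, ?_⟩
    show (c : ℂ) • v.1 = (z : Matrix (Fin 2) (Fin 2) ℂ).mulVec v.1
    rw [hmat]
    simp [Matrix.smul_mulVec]

noncomputable instance pglAct : MulAction PGL2 Pt where
  smul q P := Quotient.liftOn' q (fun g => g • P) (by
    intro a b hab
    rw [QuotientGroup.leftRel_apply] at hab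
    have hb : b = a * (a⁻¹ * b) := by group
    show a • P = b • P
    calc a • P = a • ((a⁻¹ * b) • P) := by rw [center_smul_eq hab]
    _ = (a * (a⁻¹ * b)) • P := (mul_smul _ _ _).symm
    _ = b • P := by rw [← hb])
  one_smul P := MulAction.one_smul (α := GL (Fin 2) ℂ) P
  mul_smul q r P := by
    induction q using Quotient.inductionOn' with
    | _ g =>
      induction r using Quotient.inductionOn' with
      | _ h => exact mul_smul g h P

lemma pgl_smul_def (g : GL (Fin 2) ℂ) (P : Pt) :
    (QuotientGroup.mk g : PGL2) • P = g • P := rfl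

/-- Power map from `ZMod n` (written multiplicatively) to a group element of order dividing `n`. -/
def zmodHom (n : ℕ) [NeZero n] {G : Type*} [Group G] (g : G) (h : g ^ n = 1) :
    Multiplicative (ZMod n) →* G :=
  MonoidHom.mk' (fun x => g ^ (Multiplicative.toAdd x).val)
    (by
      intro a b
      show g ^ ((Multiplicative.toAdd a) + (Multiplicative.toAdd b)).val = _
      rw [ZMod.val_add, ← pow_eq_pow_mod _ h, pow_add])

lemma zmodHom_apply (n : ℕ) [NeZero n] {G : Type*} [Group G] (g : G) (h : g ^ n = 1)
    (x : ZMod n) : zmodHom n g h (Multiplicative.ofAdd x) = g ^ x.val := rfl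

lemma Ms_pow_three : (!![0, 1; -1, 1] : Matrix (Fin 2) (Fin 2) ℂ) ^ 3 = -1 := by
  ext i j
  fin_cases i <;> fin_cases j <;>
    simp [pow_succ, Matrix.mul_apply, Fin.sum_univ_succ]

lemma Mt_pow_two : (!![0, 1; -1, 0] : Matrix (Fin 2) (Fin 2) ℂ) ^ 2 = -1 := by
  ext i j
  fin_cases i <;> fin_cases j <;>
    simp [pow_succ, Matrix.mul_apply, Fin.sum_univ_succ]

lemma neg_one_mem_center : (-1 : GL (Fin 2) ℂ) ∈ Subgroup.center (GL (Fin 2) ℂ) :=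
  Subgroup.mem_center_iff.mpr fun g => by ext i j; simp

lemma Ms0_pow : Ms0 ^ 3 = -1 := by
  ext i j
  have : ((Ms0 ^ 3 : GL (Fin 2) ℂ) : Matrix (Fin 2) (Fin 2) ℂ)
      = (!![0, 1; -1, 1] : Matrix (Fin 2) (Fin 2) ℂ) ^ 3 := by
    simp [Units.val_pow_eq_pow_val, Ms0, coe_mkOfDetNeZero]
  rw [this, Ms_pow_three]
  simp

lemma Mt0_pow : Mt0 ^ 2 = -1 := by
  ext i j
  have : ((Mt0 ^ 2 : GL (Fin 2) ℂ) : Matrix (Fin 2) (Fin 2) ℂ)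
      = (!![0, 1; -1, 0] : Matrix (Fin 2) (Fin 2) ℂ) ^ 2 := by
    simp [Units.val_pow_eq_pow_val, Mt0, coe_mkOfDetNeZero]
  rw [this, Mt_pow_two]
  simp

lemma pgl_Ms_pow : (QuotientGroup.mk Ms0 : PGL2) ^ 3 = 1 := by
  rw [← QuotientGroup.mk_pow, Ms0_pow, QuotientGroup.eq_one_iff]
  exact neg_one_mem_center

lemma pgl_Mt_pow : (QuotientGroup.mk Mt0 : PGL2) ^ 2 = 1 := by
  rw [← QuotientGroup.mk_pow, Mt0_pow, QuotientGroup.eq_one_iff]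
  exact neg_one_mem_center

open Monoid

/-- The family `(ℤ/3, ℤ/2)` of groups. -/
def Gfam : Fin 2 → Type
  | 0 => Multiplicative (ZMod 3)
  | 1 => Multiplicative (ZMod 2)

instance GfamGroup : ∀ i, Group (Gfam i)
  | 0 => inferInstanceAs (Group (Multiplicative (ZMod 3)))
  | 1 => inferInstanceAs (Group (Multiplicative (ZMod 2)))

/-- generator of `Gfam 0` -/
def g3 : Gfam 0 := Multiplicative.ofAdd (1 : ZMod 3)
/-- generator of `Gfam 1` -/
def g2 : Gfam 1 := Multiplicative.ofAdd (1 : ZMod 2)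

lemma g3_pow : g3 ^ 3 = 1 := by
  show Multiplicative.ofAdd (1 : ZMod 3) ^ 3 = 1
  refine (ofAdd_nsmul _ _).symm.trans ?_
  decide

lemma g2_pow : g2 ^ 2 = 1 := by
  show Multiplicative.ofAdd (1 : ZMod 2) ^ 2 = 1
  refine (ofAdd_nsmul _ _).symm.trans ?_
  decide

/-- The homomorphisms of the family into `PGL2`. -/
noncomputable def ffam : ∀ i, Gfam i →* PGL2 := fun i =>
  match i with
  | 0 => zmodHom 3 (QuotientGroup.mk Ms0 : PGL2) pgl_Ms_pow
  | 1 => zmodHom 2 (QuotientGroup.mk Mt0 : PGL2) pgl_Mt_pow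

lemma vne (x : ℂ) : (![x, 1] : Fin 2 → ℂ) ≠ 0 := fun h => by simpa using congrFun h 1

/-- The ping-pong sets: `X 0` = positive irrational points, `X 1` = negative irrational points. -/
def Xset : Fin 2 → Set Pt := fun i =>
  {P | ∃ x : ℝ, Irrational x ∧ (if i = 0 then 0 < x else x < 0) ∧
    P = Projectivization.mk ℂ ![(x:ℂ), 1] (vne x)}

lemma smul_mk_real (g : GL (Fin 2) ℂ) (x y : ℝ) (a : ℂ)
    (ha : a • ![(y:ℂ), 1] = (g : Matrix (Fin 2) (Fin 2) ℂ).mulVec ![(x:ℂ), 1]) :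
    g • Projectivization.mk ℂ ![(x:ℂ), 1] (vne x) = Projectivization.mk ℂ ![(y:ℂ), 1] (vne y) := by
  rw [gl_smul_mk, mk_eq_mk_iff']
  exact ⟨a, ha⟩

lemma t_maps {P : Pt} (hP : P ∈ Xset 0) : Mt0 • P ∈ Xset 1 := by
  obtain ⟨x, hirr, hpos, rfl⟩ := hP
  norm_num at hpos
  have hx : (x:ℝ) ≠ 0 := ne_of_gt hpos
  have hxc : (x:ℂ) ≠ 0 := by exact_mod_cast hx
  refine ⟨-x⁻¹, hirr.inv.neg, ?_, ?_⟩
  · simp only [if_neg (by decide : (1 : Fin 2) ≠ 0)]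
    simpa using inv_pos.mpr hpos
  · rw [smul_mk_real Mt0 x (-x⁻¹) (-(x:ℂ))]
    ext i
    fin_cases i <;>
      (simp [Mt0, coe_mkOfDetNeZero, Matrix.mulVec, dotProduct, Fin.sum_univ_succ];
       try push_cast;
       try field_simp [hxc])

lemma s_maps {P : Pt} (hP : P ∈ Xset 1) : Ms0 • P ∈ Xset 0 := by
  obtain ⟨x, hirr, hneg, rfl⟩ := hP
  norm_num at hneg
  have h1x : (0:ℝ) < 1 - x := by linarith
  have h1xne : (1:ℝ) - x ≠ 0 := ne_of_gt h1x
  have h1xc : (1:ℂ) - x ≠ 0 := by exact_mod_cast h1xne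
  refine ⟨(1 - x)⁻¹, ?_, ?_, ?_⟩
  · have : Irrational (1 - x) := by simpa using hirr.intCast_sub 1
    exact this.inv
  · simp only [if_pos rfl]
    exact inv_pos.mpr h1x
  · rw [smul_mk_real Ms0 x ((1-x)⁻¹) ((1:ℂ) - x)]
    ext i
    fin_cases i <;>
      (simp [Ms0, coe_mkOfDetNeZero, Matrix.mulVec, dotProduct, Fin.sum_univ_succ];
       try push_cast;
       try field_simp [h1xc];
       try ring)

lemma s2_maps {P : Pt} (hP : P ∈ Xset 1) : (Ms0 ^ 2) • P ∈ Xset 0 := by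
  obtain ⟨x, hirr, hneg, rfl⟩ := hP
  norm_num at hneg
  have hx : (x:ℝ) ≠ 0 := ne_of_lt hneg
  have hxc : (x:ℂ) ≠ 0 := by exact_mod_cast hx
  have hy : (x - 1)/x = 1 - x⁻¹ := by field_simp
  refine ⟨(x - 1)/x, ?_, ?_, ?_⟩
  · rw [hy]
    simpa using (hirr.inv.intCast_sub 1)
  · simp only [if_pos rfl]
    apply div_pos_iff.mpr
    right
    constructor <;> linarith
  · have hmat : ((Ms0 ^ 2 : GL (Fin 2) ℂ) : Matrix (Fin 2) (Fin 2) ℂ)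
        = !![-1, 1; -1, 0] := by
      rw [Units.val_pow_eq_pow_val]
      show (!![0, 1; -1, 1] : Matrix (Fin 2) (Fin 2) ℂ) ^ 2 = _
      ext i j
      fin_cases i <;> fin_cases j <;>
        simp [pow_succ, Matrix.mul_apply, Fin.sum_univ_succ]
    rw [smul_mk_real (Ms0 ^ 2) x ((x-1)/x) (-(x:ℂ))]
    rw [hmat]
    ext i
    fin_cases i <;>
      (simp [Matrix.mulVec, dotProduct, Fin.sum_univ_succ];
       try push_cast;
       try field_simp [hxc];
       try ring)

lemma mk_real_inj {x y : ℝ}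
    (h : Projectivization.mk ℂ ![(x:ℂ), 1] (vne x) = Projectivization.mk ℂ ![(y:ℂ), 1] (vne y)) :
    x = y := by
  rw [mk_eq_mk_iff] at h
  obtain ⟨a, ha⟩ := h
  have h1 := congrFun ha 1
  have h0 := congrFun ha 0
  simp [Units.smul_def] at h1 h0
  rw [h1] at h0
  have : (x:ℂ) = (y:ℂ) := by simpa using h0.symm
  exact_mod_cast this

lemma Xset_nonempty : ∀ i, (Xset i).Nonempty := by
  intro i
  fin_cases i
  · exact ⟨_, ⟨Real.sqrt 2, irrational_sqrt_two, by
      norm_num [Real.sqrt_pos], rfl⟩⟩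
  · exact ⟨_, ⟨-Real.sqrt 2, irrational_sqrt_two.neg, by
      norm_num [Real.sqrt_pos], rfl⟩⟩

lemma Xset_disjoint : Pairwise (Function.onFun Disjoint Xset) := by
  intro i j hij
  have key : ∀ P, P ∈ Xset 0 → P ∈ Xset 1 → False := by
    rintro P ⟨x, hx, hxp, rfl⟩ ⟨y, hy, hyn, hPy⟩
    norm_num at hxp hyn
    have := mk_real_inj hPy
    subst this
    linarith
  fin_cases i <;> fin_cases j
  · simp at hij
  · show Disjoint (Xset 0) (Xset 1)
    rw [Set.disjoint_left]
    intro P hP hP'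
    exact key P hP hP'
  · show Disjoint (Xset 1) (Xset 0)
    rw [Set.disjoint_left]
    intro P hP hP'
    exact key P hP' hP
  · simp at hij

lemma Xset_pp : Pairwise fun i j => ∀ h : Gfam i, h ≠ 1 → ffam i h • Xset j ⊆ Xset i := by
  have hz3 : ∀ z : ZMod 3, z ≠ 0 → z = 1 ∨ z = 2 := by decide
  have hz2 : ∀ z : ZMod 2, z ≠ 0 → z = 1 := by decide
  intro i j hij
  fin_cases i <;> fin_cases j
  · simp at hij
  · -- i = 0, j = 1
    show ∀ h : Multiplicative (ZMod 3), h ≠ 1 → ffam 0 h • Xset 1 ⊆ Xset 0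
    intro h hne
    have hz : Multiplicative.toAdd h ≠ 0 := by
      intro h0
      apply hne
      have : h = Multiplicative.ofAdd (Multiplicative.toAdd h) := rfl
      rw [this, h0]
      rfl
    intro P hP
    rw [Set.mem_smul_set] at hP
    obtain ⟨Q, hQ, rfl⟩ := hP
    have hfh : ffam 0 h = (QuotientGroup.mk Ms0 : PGL2) ^ (Multiplicative.toAdd h).val := rfl
    rcases hz3 _ hz with h1 | h2
    · rw [hfh, h1]
      show ((QuotientGroup.mk Ms0 : PGL2) ^ (1 : ZMod 3).val) • Q ∈ Xset 0
      have : (1 : ZMod 3).val = 1 := rfl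
      rw [this, pow_one, pgl_smul_def]
      exact s_maps hQ
    · rw [hfh, h2]
      show ((QuotientGroup.mk Ms0 : PGL2) ^ (2 : ZMod 3).val) • Q ∈ Xset 0
      have : (2 : ZMod 3).val = 2 := rfl
      rw [this, ← QuotientGroup.mk_pow]
      rw [pgl_smul_def]
      exact s2_maps hQ
  · -- i = 1, j = 0
    show ∀ h : Multiplicative (ZMod 2), h ≠ 1 → ffam 1 h • Xset 0 ⊆ Xset 1
    intro h hne
    have hz : Multiplicative.toAdd h ≠ 0 := by
      intro h0
      apply hne
      have : h = Multiplicative.ofAdd (Multiplicative.toAdd h) := rfl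
      rw [this, h0]
      rfl
    intro P hP
    rw [Set.mem_smul_set] at hP
    obtain ⟨Q, hQ, rfl⟩ := hP
    have hfh : ffam 1 h = (QuotientGroup.mk Mt0 : PGL2) ^ (Multiplicative.toAdd h).val := rfl
    rw [hfh, hz2 _ hz]
    show ((QuotientGroup.mk Mt0 : PGL2) ^ (1 : ZMod 2).val) • Q ∈ Xset 1
    have : (1 : ZMod 2).val = 1 := rfl
    rw [this, pow_one, pgl_smul_def]
    exact t_maps hQ
  · simp at hij


open Monoid.CoprodI in
/-- map of generators into the free product -/
noncomputable def efun : Fin 2 → Monoid.CoprodI Gfam := fun i =>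
  match i with
  | 0 => Monoid.CoprodI.of g3
  | 1 => Monoid.CoprodI.of g2

lemma herel : ∀ r ∈ hRels, FreeGroup.lift efun r = 1 := by
  intro r hr
  simp only [hRels, Set.mem_insert_iff, Set.mem_singleton_iff] at hr
  rcases hr with rfl | rfl
  · rw [map_pow, FreeGroup.lift_apply_of]
    show (Monoid.CoprodI.of g3) ^ 3 = 1
    rw [← map_pow, g3_pow, _root_.map_one]
  · rw [map_pow, FreeGroup.lift_apply_of]
    show (Monoid.CoprodI.of g2) ^ 2 = 1
    rw [← map_pow, g2_pow, _root_.map_one]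

lemma hs_cube : hs ^ 3 = 1 := by
  have hmem : (FreeGroup.of 0 ^ 3 : FreeGroup (Fin 2)) ∈ Subgroup.normalClosure hRels :=
    Subgroup.subset_normalClosure (by left; rfl)
  show (QuotientGroup.mk (FreeGroup.of (0 : Fin 2)) : Hgrp) ^ 3 = 1
  refine (QuotientGroup.mk_pow _ _ _).symm.trans ?_
  exact (QuotientGroup.eq_one_iff _).mpr hmem

lemma ht_sq : ht ^ 2 = 1 := by
  have hmem : (FreeGroup.of 1 ^ 2 : FreeGroup (Fin 2)) ∈ Subgroup.normalClosure hRels :=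
    Subgroup.subset_normalClosure (by right; rfl)
  show (QuotientGroup.mk (FreeGroup.of (1 : Fin 2)) : Hgrp) ^ 2 = 1
  refine (QuotientGroup.mk_pow _ _ _).symm.trans ?_
  exact (QuotientGroup.eq_one_iff _).mpr hmem

/-- maps of the factors back into `Hgrp` -/
noncomputable def bfun : ∀ i, Gfam i →* Hgrp := fun i =>
  match i with
  | 0 => zmodHom 3 hs hs_cube
  | 1 => zmodHom 2 ht ht_sq

/-- the embedding of `Hgrp` into the free product -/
noncomputable def eHom : Hgrp →* Monoid.CoprodI Gfam := PresentedGroup.toGroup herel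

/-- the retraction of the free product onto `Hgrp` -/
noncomputable def bHom : Monoid.CoprodI Gfam →* Hgrp := Monoid.CoprodI.lift bfun

lemma bHom_eHom : ∀ x : Hgrp, bHom (eHom x) = x := by
  have hext : bHom.comp eHom = MonoidHom.id Hgrp := by
    apply PresentedGroup.ext
    intro x
    fin_cases x
    · show bHom (eHom (PresentedGroup.of 0)) = PresentedGroup.of 0
      rw [eHom, PresentedGroup.toGroup.of]
      show bHom (Monoid.CoprodI.of g3) = _
      rw [bHom, Monoid.CoprodI.lift_of]
      show hs ^ (1 : ZMod 3).val = _
      rw [show (1 : ZMod 3).val = 1 from rfl, pow_one]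
      rfl
    · show bHom (eHom (PresentedGroup.of 1)) = PresentedGroup.of 1
      rw [eHom, PresentedGroup.toGroup.of]
      show bHom (Monoid.CoprodI.of g2) = _
      rw [bHom, Monoid.CoprodI.lift_of]
      show ht ^ (1 : ZMod 2).val = _
      rw [show (1 : ZMod 2).val = 1 from rfl, pow_one]
      rfl
  intro x
  exact DFunLike.congr_fun hext x

lemma eHom_injective : Function.Injective eHom :=
  Function.LeftInverse.injective bHom_eHom

lemma hcard : (3 : Cardinal) ≤ Cardinal.mk (Fin 2) ∨ ∃ i, (3 : Cardinal) ≤ Cardinal.mk (Gfam i) := by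
  right
  refine ⟨0, ?_⟩
  show (3 : Cardinal) ≤ Cardinal.mk (Multiplicative (ZMod 3))
  have : Cardinal.mk (Multiplicative (ZMod 3)) = 3 := by
    calc Cardinal.mk (Multiplicative (ZMod 3)) = Cardinal.mk (ZMod 3) :=
          (Cardinal.mk_congr Multiplicative.ofAdd).symm
    _ = 3 := by simp [Cardinal.mk_fintype]
  exact le_of_eq this.symm

/-- the representation of the free product in `PGL2` -/
noncomputable def phiHom : Monoid.CoprodI Gfam →* PGL2 := Monoid.CoprodI.lift ffam

lemma phiHom_injective : Function.Injective phiHom :=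
  Monoid.CoprodI.lift_injective_of_ping_pong ffam hcard Xset Xset_nonempty Xset_disjoint Xset_pp

theorem stmt13 :
    ((!![0, 1; -1, 1] : Matrix (Fin 2) (Fin 2) ℂ) ^ 3 = -1 ∧
     (!![0, 1; -1, 0] : Matrix (Fin 2) (Fin 2) ℂ) ^ 2 = -1) ∧
    ∃ ρ : Hgrp →* PGL2,
      ρ hs = (QuotientGroup.mk Ms0 : PGL2) ∧
      ρ ht = (QuotientGroup.mk Mt0 : PGL2) ∧
      Function.Injective ρ := by
  refine ⟨⟨Ms_pow_three, Mt_pow_two⟩, phiHom.comp eHom, ?_, ?_, phiHom_injective.comp eHom_injective⟩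
  · show phiHom (eHom (PresentedGroup.of 0)) = _
    rw [eHom, PresentedGroup.toGroup.of]
    show phiHom (Monoid.CoprodI.of g3) = _
    rw [phiHom, Monoid.CoprodI.lift_of]
    show (QuotientGroup.mk Ms0 : PGL2) ^ (1 : ZMod 3).val = _
    rw [show (1 : ZMod 3).val = 1 from rfl, pow_one]
  · show phiHom (eHom (PresentedGroup.of 1)) = _
    rw [eHom, PresentedGroup.toGroup.of]
    show phiHom (Monoid.CoprodI.of g2) = _
    rw [phiHom, Monoid.CoprodI.lift_of]
    show (QuotientGroup.mk Mt0 : PGL2) ^ (1 : ZMod 2).val = _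
    rw [show (1 : ZMod 2).val = 1 from rfl, pow_one]
end

section
/- For every g ∈ H with g ≠ 1, the set of A ∈ ℂ with A ≠ 0 such that ρ_A(g) = 1 in PGL(2,ℂ) is countable. -/
set_option synthInstance.maxHeartbeats 1000000
set_option maxHeartbeats 1000000

/-- The matrix `!![0, A⁻¹; −A, 1]` as an element of `GL(2,ℂ)`, for `A ≠ 0`. -/
noncomputable def MsA (A : ℂ) (hA : A ≠ 0) : GL (Fin 2) ℂ :=
  Matrix.GeneralLinearGroup.mkOfDetNeZero !![0, A⁻¹; -A, 1]
    (by rw [Matrix.det_fin_two_of]; field_simp; norm_num)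


namespace Stmt14

abbrev GL2 := GL (Fin 2) ℂ

lemma val_Mt0 : (Mt0 : Matrix (Fin 2) (Fin 2) ℂ) = !![0, 1; -1, 0] := rfl

lemma val_MsA (A : ℂ) (hA : A ≠ 0) :
    (MsA A hA : Matrix (Fin 2) (Fin 2) ℂ) = !![0, A⁻¹; -A, 1] := rfl

/-- a GL2 element whose matrix is scalar is central -/
lemma central_of_scalar (u : GL2) (c : ℂ)
    (h : (u : Matrix (Fin 2) (Fin 2) ℂ) = c • 1) : u ∈ Subgroup.center GL2 := by
  rw [Subgroup.mem_center_iff]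
  intro g
  ext i j
  show ((g * u : GL2) : Matrix (Fin 2) (Fin 2) ℂ) i j
      = ((u * g : GL2) : Matrix (Fin 2) (Fin 2) ℂ) i j
  rw [Matrix.GeneralLinearGroup.coe_mul, Matrix.GeneralLinearGroup.coe_mul, h,
    Matrix.mul_smul, Matrix.smul_mul, mul_one, one_mul]

noncomputable def E01 : GL2 :=
  Matrix.GeneralLinearGroup.mkOfDetNeZero !![1, 1; 0, 1]
    (by norm_num [Matrix.det_fin_two_of])

noncomputable def E10 : GL2 :=
  Matrix.GeneralLinearGroup.mkOfDetNeZero !![1, 0; 1, 1]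
    (by norm_num [Matrix.det_fin_two_of])

lemma scalar_of_central (u : GL2) (hu : u ∈ Subgroup.center GL2) :
    (u : Matrix (Fin 2) (Fin 2) ℂ) 0 1 = 0 ∧
    (u : Matrix (Fin 2) (Fin 2) ℂ) 1 0 = 0 ∧
    (u : Matrix (Fin 2) (Fin 2) ℂ) 0 0 = (u : Matrix (Fin 2) (Fin 2) ℂ) 1 1 := by
  rw [Subgroup.mem_center_iff] at hu
  have h1 : ((E01 * u : GL2) : Matrix (Fin 2) (Fin 2) ℂ)
      = ((u * E01 : GL2) : Matrix (Fin 2) (Fin 2) ℂ) := by rw [hu E01]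
  have h2 : ((E10 * u : GL2) : Matrix (Fin 2) (Fin 2) ℂ)
      = ((u * E10 : GL2) : Matrix (Fin 2) (Fin 2) ℂ) := by rw [hu E10]
  rw [Matrix.GeneralLinearGroup.coe_mul] at h1 h2
  set U : Matrix (Fin 2) (Fin 2) ℂ := (u : Matrix (Fin 2) (Fin 2) ℂ) with hU
  have hUe : U = !![U 0 0, U 0 1; U 1 0, U 1 1] := Matrix.eta_fin_two U
  have e1 : (!![1,1;0,1] : Matrix (Fin 2) (Fin 2) ℂ) * U = U * !![1,1;0,1] := h1
  have e2 : (!![1,0;1,1] : Matrix (Fin 2) (Fin 2) ℂ) * U = U * !![1,0;1,1] := h2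
  rw [hUe, Matrix.mul_fin_two, Matrix.mul_fin_two] at e1 e2
  have c1 := congrFun (congrFun e1 0) 0
  have c2 := congrFun (congrFun e1 0) 1
  have c3 := congrFun (congrFun e2 0) 0
  simp at c1 c2 c3
  exact ⟨c3, c1, by linear_combination -c2⟩

end Stmt14

namespace Stmt14

noncomputable def pr : GL2 →* PGL2 := QuotientGroup.mk' (Subgroup.center GL2)

lemma pr_eq_mk (u : GL2) : pr u = (QuotientGroup.mk u : PGL2) := rfl

lemma Mt0_sq : ((Mt0 ^ 2 : GL2) : Matrix (Fin 2) (Fin 2) ℂ) = (-1 : ℂ) • 1 := by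
  rw [Units.val_pow_eq_pow_val, val_Mt0, pow_two, Matrix.mul_fin_two]
  norm_num
  ext i j
  fin_cases i <;> fin_cases j <;> simp

lemma MsA_cube (A : ℂ) (hA : A ≠ 0) :
    ((MsA A hA ^ 3 : GL2) : Matrix (Fin 2) (Fin 2) ℂ) = (-1 : ℂ) • 1 := by
  rw [Units.val_pow_eq_pow_val, val_MsA, pow_succ, pow_two, Matrix.mul_fin_two,
    Matrix.mul_fin_two]
  ext i j
  fin_cases i <;> fin_cases j <;> simp [Matrix.one_apply] <;> field_simp <;> ring_nf <;> simp

lemma pr_Mt0_sq : pr Mt0 ^ 2 = 1 := by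
  rw [← map_pow]
  exact (QuotientGroup.eq_one_iff _).2 (central_of_scalar _ _ (Mt0_sq))

lemma pr_MsA_cube (A : ℂ) (hA : A ≠ 0) : pr (MsA A hA) ^ 3 = 1 := by
  rw [← map_pow]
  exact (QuotientGroup.eq_one_iff _).2 (central_of_scalar _ _ (MsA_cube A hA))

/-- homomorphism from `Multiplicative (ZMod n)` determined by an element of order dividing n -/
def zmodHom {M : Type*} [Group M] (n : ℕ) [NeZero n] (g : M) (h : g ^ n = 1) :
    Multiplicative (ZMod n) →* M :=
  MonoidHom.mk' (fun x => g ^ (Multiplicative.toAdd x).val)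
  (by
    have key : ∀ m : ℕ, g ^ (m % n) = g ^ m := by
      intro m
      conv_rhs => rw [← Nat.div_add_mod m n]
      rw [pow_add, pow_mul, h, one_pow, one_mul]
    intro a b
    show g ^ (Multiplicative.toAdd (a * b)).val = _
    rw [toAdd_mul, ZMod.val_add, key, pow_add])

lemma zmodHom_apply {M : Type*} [Group M] (n : ℕ) [NeZero n] (g : M) (h : g ^ n = 1)
    (x : ZMod n) : zmodHom n g h (Multiplicative.ofAdd x) = g ^ x.val := rfl

/-- the factor groups : ℤ/3 and ℤ/2 -/
def Gi : Fin 2 → Type := fun i => Multiplicative (ZMod (![3, 2] i))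

instance (i : Fin 2) : CommGroup (Gi i) := Multiplicative.commGroup

instance (i : Fin 2) : NeZero (![3, 2] i) := by fin_cases i <;> exact ⟨by norm_num⟩

/-- the distinguished generator of each factor -/
def gen (i : Fin 2) : Gi i := Multiplicative.ofAdd (1 : ZMod (![3, 2] i))

lemma hs_cube : hs ^ 3 = 1 := by
  have : hs ^ 3 = (QuotientGroup.mk (FreeGroup.of 0 ^ 3) : Hgrp) := rfl
  exact this.trans ((QuotientGroup.eq_one_iff _).2
    (Subgroup.subset_normalClosure (Set.mem_insert _ _)))

lemma ht_sq : ht ^ 2 = 1 := by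
  have : ht ^ 2 = (QuotientGroup.mk (FreeGroup.of 1 ^ 2) : Hgrp) := rfl
  exact this.trans ((QuotientGroup.eq_one_iff _).2
    (Subgroup.subset_normalClosure (Set.mem_insert_of_mem _ rfl)))

/-- H → free product -/
noncomputable def ψ : Hgrp →* Monoid.CoprodI Gi :=
  PresentedGroup.toGroup (f := fun i => Monoid.CoprodI.of (gen i))
  (by
    intro r hr
    rcases hr with h | h
    · subst h
      rw [map_pow, FreeGroup.lift_apply_of, ← map_pow]
      have : gen 0 ^ 3 = 1 := by
        show Multiplicative.ofAdd (1 : ZMod 3) ^ 3 = 1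
        exact (ofAdd_nsmul 3 (1 : ZMod 3)).symm.trans (by decide)
      rw [this, map_one]
    · rw [Set.mem_singleton_iff] at h
      subst h
      rw [map_pow, FreeGroup.lift_apply_of, ← map_pow]
      have : gen 1 ^ 2 = 1 := by
        show Multiplicative.ofAdd (1 : ZMod 2) ^ 2 = 1
        exact (ofAdd_nsmul 2 (1 : ZMod 2)).symm.trans (by decide)
      rw [this, map_one])

lemma ψ_of (i : Fin 2) : ψ (PresentedGroup.of i) = Monoid.CoprodI.of (gen i) :=
  PresentedGroup.toGroup.of _

/-- retraction : free product → H -/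
noncomputable def retr : Monoid.CoprodI Gi →* Hgrp :=
  Monoid.CoprodI.lift (fun i => match i with
    | 0 => zmodHom 3 hs hs_cube
    | 1 => zmodHom 2 ht ht_sq)

lemma retr_ψ (g : Hgrp) : retr (ψ g) = g := by
  have : retr.comp ψ = MonoidHom.id Hgrp := by
    apply PresentedGroup.ext
    intro i
    fin_cases i <;>
      simp only [MonoidHom.comp_apply, MonoidHom.id_apply, ψ_of,
        Monoid.CoprodI.lift_of, retr]
    · show zmodHom 3 hs hs_cube (Multiplicative.ofAdd (1 : ZMod 3)) = PresentedGroup.of 0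
      rw [zmodHom_apply, ZMod.val_one, pow_one]
      rfl
    · show zmodHom 2 ht ht_sq (Multiplicative.ofAdd (1 : ZMod 2)) = PresentedGroup.of 1
      rw [zmodHom_apply, ZMod.val_one, pow_one]
      rfl
  exact DFunLike.congr_fun this g

end Stmt14

namespace Stmt14

open Matrix LinearAlgebra.Projectivization Projectivization

abbrev P1 := ℙ ℂ (Fin 2 → ℂ)

lemma gl_mulVec_cancel (g : GL2) (v : Fin 2 → ℂ) :
    ((g⁻¹ : GL2) : Matrix (Fin 2) (Fin 2) ℂ) *ᵥ ((g : Matrix (Fin 2) (Fin 2) ℂ) *ᵥ v) = v := by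
  rw [Matrix.mulVec_mulVec, ← Matrix.GeneralLinearGroup.coe_mul, inv_mul_cancel,
    Matrix.GeneralLinearGroup.coe_one, Matrix.one_mulVec]

lemma glInj (g : GL2) :
    Function.Injective (Matrix.mulVecLin (g : Matrix (Fin 2) (Fin 2) ℂ)) := by
  intro a b hab
  have hab' : (g : Matrix (Fin 2) (Fin 2) ℂ) *ᵥ a = (g : Matrix (Fin 2) (Fin 2) ℂ) *ᵥ b := hab
  calc a = ((g⁻¹ : GL2) : Matrix (Fin 2) (Fin 2) ℂ) *ᵥ ((g : Matrix (Fin 2) (Fin 2) ℂ) *ᵥ a) :=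
        (gl_mulVec_cancel g a).symm
    _ = ((g⁻¹ : GL2) : Matrix (Fin 2) (Fin 2) ℂ) *ᵥ ((g : Matrix (Fin 2) (Fin 2) ℂ) *ᵥ b) := by
        rw [hab']
    _ = b := gl_mulVec_cancel g b

lemma mulVec_ne_zero (g : GL2) {v : Fin 2 → ℂ} (hv : v ≠ 0) :
    (g : Matrix (Fin 2) (Fin 2) ℂ) *ᵥ v ≠ 0 := by
  intro h
  apply hv
  calc v = ((g⁻¹ : GL2) : Matrix (Fin 2) (Fin 2) ℂ) *ᵥ ((g : Matrix (Fin 2) (Fin 2) ℂ) *ᵥ v) :=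
        (gl_mulVec_cancel g v).symm
    _ = 0 := by rw [h, Matrix.mulVec_zero]

noncomputable def glSmul (g : GL2) : P1 → P1 :=
  Projectivization.map (Matrix.mulVecLin (g : Matrix (Fin 2) (Fin 2) ℂ)) (glInj g)

lemma mk_congr {v w : Fin 2 → ℂ} (h : v = w) (hv : v ≠ 0) :
    Projectivization.mk ℂ v hv = Projectivization.mk ℂ w (h ▸ hv) := by subst h; rfl

lemma glSmul_mk (g : GL2) (v : Fin 2 → ℂ) (hv : v ≠ 0) :
    glSmul g (Projectivization.mk ℂ v hv) =
      Projectivization.mk ℂ ((g : Matrix (Fin 2) (Fin 2) ℂ) *ᵥ v) (mulVec_ne_zero g hv) := rfl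

noncomputable instance : MulAction GL2 P1 where
  smul := glSmul
  one_smul x := by
    induction x using Projectivization.ind with
    | h v hv =>
      show glSmul 1 (Projectivization.mk ℂ v hv) = _
      rw [glSmul_mk]
      exact mk_congr (by simp) _
  mul_smul g h x := by
    induction x using Projectivization.ind with
    | h v hv =>
      show glSmul (g * h) (Projectivization.mk ℂ v hv)
          = glSmul g (glSmul h (Projectivization.mk ℂ v hv))
      rw [glSmul_mk, glSmul_mk, glSmul_mk]
      exact mk_congr (by rw [Matrix.GeneralLinearGroup.coe_mul, ← Matrix.mulVec_mulVec]) _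

lemma gl_smul_def (g : GL2) (x : P1) : g • x = glSmul g x := rfl

lemma central_smul_eq (z : GL2) (hz : z ∈ Subgroup.center GL2) (x : P1) : z • x = x := by
  obtain ⟨h1, h2, h3⟩ := scalar_of_central z hz
  have hsc : (z : Matrix (Fin 2) (Fin 2) ℂ) = ((z : Matrix (Fin 2) (Fin 2) ℂ) 0 0) • 1 := by
    rw [Matrix.eta_fin_two ((z : GL2) : Matrix (Fin 2) (Fin 2) ℂ)]
    ext i j
    fin_cases i <;> fin_cases j <;>
      simp [h1, h2, h3, Matrix.one_apply]
  induction x using Projectivization.ind with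
  | h v hv =>
    rw [gl_smul_def, glSmul_mk]
    rw [Projectivization.mk_eq_mk_iff']
    refine ⟨(z : Matrix (Fin 2) (Fin 2) ℂ) 0 0, ?_⟩
    conv_rhs => rw [hsc]
    rw [Matrix.smul_mulVec, Matrix.one_mulVec]

lemma center_le_ker : Subgroup.center GL2 ≤ (MulAction.toPermHom GL2 P1).ker := by
  intro z hz
  rw [MonoidHom.mem_ker]
  ext x
  simp only [MulAction.toPermHom_apply, Equiv.Perm.smul_def, Equiv.Perm.coe_one, id_eq,
    MulAction.toPerm_apply]
  exact central_smul_eq z hz x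

noncomputable def prPerm : PGL2 →* Equiv.Perm P1 :=
  QuotientGroup.lift _ (MulAction.toPermHom GL2 P1) center_le_ker

noncomputable instance : MulAction PGL2 P1 := MulAction.compHom _ prPerm

lemma pgl_smul_mk (u : GL2) (x : P1) : (QuotientGroup.mk u : PGL2) • x = u • x := rfl

/-- the ping-pong set for the `s`-factor -/
noncomputable def XS : Set P1 := {x | ‖x.rep 0‖ < ‖x.rep 1‖}

/-- the ping-pong set for the `t`-factor -/
noncomputable def XT : Set P1 := {x | ‖x.rep 1‖ ≤ ‖x.rep 0‖}

lemma mem_XS_mk {v : Fin 2 → ℂ} (hv : v ≠ 0) :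
    Projectivization.mk ℂ v hv ∈ XS ↔ ‖v 0‖ < ‖v 1‖ := by
  obtain ⟨a, ha⟩ := Projectivization.exists_smul_eq_mk_rep ℂ v hv
  have hrep : ∀ i, ‖(Projectivization.mk ℂ v hv).rep i‖ = ‖(a : ℂ)‖ * ‖v i‖ := by
    intro i
    rw [← ha]
    simp [Units.smul_def, norm_mul]
  have hna : 0 < ‖(a : ℂ)‖ := norm_pos_iff.2 a.ne_zero
  show ‖(Projectivization.mk ℂ v hv).rep 0‖ < ‖(Projectivization.mk ℂ v hv).rep 1‖ ↔ _
  rw [hrep 0, hrep 1, mul_lt_mul_iff_right₀ hna]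

lemma mem_XT_mk {v : Fin 2 → ℂ} (hv : v ≠ 0) :
    Projectivization.mk ℂ v hv ∈ XT ↔ ‖v 1‖ ≤ ‖v 0‖ := by
  obtain ⟨a, ha⟩ := Projectivization.exists_smul_eq_mk_rep ℂ v hv
  have hrep : ∀ i, ‖(Projectivization.mk ℂ v hv).rep i‖ = ‖(a : ℂ)‖ * ‖v i‖ := by
    intro i
    rw [← ha]
    simp [Units.smul_def, norm_mul]
  have hna : 0 < ‖(a : ℂ)‖ := norm_pos_iff.2 a.ne_zero
  show ‖(Projectivization.mk ℂ v hv).rep 1‖ ≤ ‖(Projectivization.mk ℂ v hv).rep 0‖ ↔ _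
  rw [hrep 0, hrep 1, mul_le_mul_iff_right₀ hna]

end Stmt14

namespace Stmt14

open Matrix LinearAlgebra.Projectivization Projectivization

noncomputable def M10 : GL2 := MsA 10 (by norm_num)

noncomputable def ρs : PGL2 := pr M10
noncomputable def ρt : PGL2 := pr Mt0

lemma ρs_cube : ρs ^ 3 = 1 := pr_MsA_cube 10 (by norm_num)
lemma ρt_sq : ρt ^ 2 = 1 := pr_Mt0_sq

lemma norm10 : ‖(10 : ℂ)‖ = 10 := by norm_num

lemma v0_ne {v : Fin 2 → ℂ} (hv : v ≠ 0) (h : ‖v 1‖ ≤ ‖v 0‖) : v 0 ≠ 0 := by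
  intro h0
  apply hv
  have h1 : v 1 = 0 := by
    rw [h0, norm_zero] at h
    exact norm_le_zero_iff.1 h
  funext i
  fin_cases i <;> simp [h0, h1]

lemma M10_mulVec0 (v : Fin 2 → ℂ) :
    ((M10 : Matrix (Fin 2) (Fin 2) ℂ) *ᵥ v) 0 = (10 : ℂ)⁻¹ * v 1 := by
  show ((!![0, (10:ℂ)⁻¹; -10, 1]) *ᵥ v) 0 = _
  simp [Matrix.mulVec, dotProduct, Matrix.vecHead, Matrix.vecTail, Fin.sum_univ_two]

lemma M10_mulVec1 (v : Fin 2 → ℂ) :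
    ((M10 : Matrix (Fin 2) (Fin 2) ℂ) *ᵥ v) 1 = -10 * v 0 + v 1 := by
  show ((!![0, (10:ℂ)⁻¹; -10, 1]) *ᵥ v) 1 = _
  simp [Matrix.mulVec, dotProduct, Matrix.vecHead, Matrix.vecTail, Fin.sum_univ_two]

lemma M10sq_val : ((M10 ^ 2 : GL2) : Matrix (Fin 2) (Fin 2) ℂ) = !![-1, (10:ℂ)⁻¹; -10, 0] := by
  rw [Units.val_pow_eq_pow_val]
  show (!![0, (10:ℂ)⁻¹; -10, 1]) ^ 2 = _
  rw [pow_two, Matrix.mul_fin_two]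
  norm_num

lemma Mt0_mulVec (v : Fin 2 → ℂ) (i : Fin 2) :
    ((Mt0 : Matrix (Fin 2) (Fin 2) ℂ) *ᵥ v) i = ![v 1, -(v 0)] i := by
  fin_cases i <;>
    simp [val_Mt0, Matrix.mulVec, dotProduct, Matrix.vecHead, Matrix.vecTail, Fin.sum_univ_two]

lemma pingS1 {v : Fin 2 → ℂ} (hv : v ≠ 0) (h : ‖v 1‖ ≤ ‖v 0‖) :
    ρs • Projectivization.mk ℂ v hv ∈ XS := by
  rw [ρs, pr_eq_mk, pgl_smul_mk, gl_smul_def, glSmul_mk, mem_XS_mk, M10_mulVec0, M10_mulVec1]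
  have hv0 : v 0 ≠ 0 := v0_ne hv h
  have p0 : 0 < ‖v 0‖ := norm_pos_iff.2 hv0
  have e1 : ‖(10:ℂ)⁻¹ * v 1‖ = (10:ℝ)⁻¹ * ‖v 1‖ := by rw [norm_mul, norm_inv, norm10]
  have harg : ((-10 : ℂ) * v 0 + v 1) + (-(v 1)) = -10 * v 0 := by ring
  have hlow : ‖(-10:ℂ) * v 0‖ ≤ ‖(-10:ℂ) * v 0 + v 1‖ + ‖v 1‖ := by
    calc ‖(-10:ℂ) * v 0‖ = ‖((-10:ℂ) * v 0 + v 1) + (-(v 1))‖ := by rw [harg]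
      _ ≤ ‖(-10:ℂ) * v 0 + v 1‖ + ‖-(v 1)‖ := norm_add_le _ _
      _ = ‖(-10:ℂ) * v 0 + v 1‖ + ‖v 1‖ := by rw [norm_neg]
  have e2 : ‖(-10:ℂ) * v 0‖ = 10 * ‖v 0‖ := by
    rw [norm_mul]
    norm_num
  rw [e1]
  rw [e2] at hlow
  linarith

lemma pingS2 {v : Fin 2 → ℂ} (hv : v ≠ 0) (h : ‖v 1‖ ≤ ‖v 0‖) :
    (ρs ^ 2) • Projectivization.mk ℂ v hv ∈ XS := by
  have hρ : ρs ^ 2 = (QuotientGroup.mk (M10 ^ 2) : PGL2) := by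
    rw [ρs, pr, ← map_pow]
    rfl
  rw [hρ, pgl_smul_mk, gl_smul_def, glSmul_mk, mem_XS_mk]
  have e0 : (((M10 ^ 2 : GL2) : Matrix (Fin 2) (Fin 2) ℂ) *ᵥ v) 0 = -v 0 + (10:ℂ)⁻¹ * v 1 := by
    rw [M10sq_val]
    simp [Matrix.mulVec, dotProduct, Matrix.vecHead, Matrix.vecTail, Fin.sum_univ_two]
  have e1 : (((M10 ^ 2 : GL2) : Matrix (Fin 2) (Fin 2) ℂ) *ᵥ v) 1 = -10 * v 0 := by
    rw [M10sq_val]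
    simp [Matrix.mulVec, dotProduct, Matrix.vecHead, Matrix.vecTail, Fin.sum_univ_two]
  rw [e0, e1]
  have hv0 : v 0 ≠ 0 := v0_ne hv h
  have p0 : 0 < ‖v 0‖ := norm_pos_iff.2 hv0
  have u1 : ‖-v 0 + (10:ℂ)⁻¹ * v 1‖ ≤ ‖v 0‖ + (10:ℝ)⁻¹ * ‖v 1‖ := by
    calc ‖-v 0 + (10:ℂ)⁻¹ * v 1‖ ≤ ‖-v 0‖ + ‖(10:ℂ)⁻¹ * v 1‖ := norm_add_le _ _
      _ = ‖v 0‖ + (10:ℝ)⁻¹ * ‖v 1‖ := by rw [norm_neg, norm_mul, norm_inv, norm10]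
  have e2 : ‖(-10:ℂ) * v 0‖ = 10 * ‖v 0‖ := by
    rw [norm_mul]
    norm_num
  rw [e2]
  linarith

lemma pingT {v : Fin 2 → ℂ} (hv : v ≠ 0) (h : ‖v 0‖ < ‖v 1‖) :
    ρt • Projectivization.mk ℂ v hv ∈ XT := by
  rw [ρt, pr_eq_mk, pgl_smul_mk, gl_smul_def, glSmul_mk, mem_XT_mk,
    Mt0_mulVec v 0, Mt0_mulVec v 1]
  show ‖-(v 0)‖ ≤ ‖v 1‖
  rw [norm_neg]
  exact le_of_lt h

/-- the homomorphisms from the factors into PGL2 -/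
lemma zmod3_cases : ∀ z : ZMod 3, z ≠ 0 → z = 1 ∨ z = 2 := by decide

lemma zmod2_cases : ∀ z : ZMod 2, z ≠ 0 → z = 1 := by decide

noncomputable def fPGL : ∀ i : Fin 2, Gi i →* PGL2 := fun i => match i with
  | 0 => zmodHom 3 ρs ρs_cube
  | 1 => zmodHom 2 ρt ρt_sq

noncomputable def χ : Monoid.CoprodI Gi →* PGL2 := Monoid.CoprodI.lift fPGL

/-- the ping-pong sets -/
noncomputable def Xsets : Fin 2 → Set P1 := ![XS, XT]

lemma χ_inj : Function.Injective χ := by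
  apply Monoid.CoprodI.lift_injective_of_ping_pong fPGL _ Xsets
  · -- nonempty
    intro i
    fin_cases i
    · refine ⟨Projectivization.mk ℂ ![0, 1] (by
        intro hzero
        have := congrFun hzero 1
        simp at this), ?_⟩
      show _ ∈ XS
      rw [mem_XS_mk]
      simp
    · refine ⟨Projectivization.mk ℂ ![1, 0] (by
        intro hzero
        have := congrFun hzero 0
        simp at this), ?_⟩
      show _ ∈ XT
      rw [mem_XT_mk]
      simp
  · -- disjoint
    intro i j hij
    have hd : Disjoint XS XT := by
      rw [Set.disjoint_left]
      intro x hx hx'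
      simp only [XS, Set.mem_setOf_eq] at hx
      simp only [XT, Set.mem_setOf_eq] at hx'
      linarith
    fin_cases i <;> fin_cases j <;> simp at hij ⊢ <;>
      simp only [Function.onFun, Xsets] <;>
      simp [hd, hd.symm]
  · -- ping pong
    intro i j hij
    intro h hne
    fin_cases i <;> fin_cases j
    · exact absurd rfl hij
    · -- i = 0 : s-factor moves XT into XS
      intro x hx
      rw [Set.mem_smul_set] at hx
      obtain ⟨y, hy, rfl⟩ := hx
      induction y using Projectivization.ind with
      | h v hv =>
        have hy' : ‖v 1‖ ≤ ‖v 0‖ := by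
          have : Projectivization.mk ℂ v hv ∈ XT := hy
          rwa [mem_XT_mk] at this
        have hval : fPGL 0 h = ρs ^ (Multiplicative.toAdd h).val := rfl
        have hz : Multiplicative.toAdd h ≠ 0 := by
          intro h0
          apply hne
          have : h = Multiplicative.ofAdd (Multiplicative.toAdd h) := rfl
          rw [this, h0]
          rfl
        have hcases : Multiplicative.toAdd h = 1 ∨ Multiplicative.toAdd h = 2 :=
          zmod3_cases _ hz
        show fPGL 0 h • Projectivization.mk ℂ v hv ∈ XS
        rcases hcases with hc | hc
        · rw [hval, hc]
          show ρs ^ (1 : ℕ) • _ ∈ XS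
          rw [pow_one]
          exact pingS1 hv hy'
        · rw [hval, hc]
          show ρs ^ (2 : ℕ) • _ ∈ XS
          exact pingS2 hv hy'
    · -- i = 1 : t-factor moves XS into XT
      intro x hx
      rw [Set.mem_smul_set] at hx
      obtain ⟨y, hy, rfl⟩ := hx
      induction y using Projectivization.ind with
      | h v hv =>
        have hy' : ‖v 0‖ < ‖v 1‖ := by
          have : Projectivization.mk ℂ v hv ∈ XS := hy
          rwa [mem_XS_mk] at this
        have hval : fPGL 1 h = ρt ^ (Multiplicative.toAdd h).val := rfl
        have hz2 : Multiplicative.toAdd h = 1 := by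
          have hz : Multiplicative.toAdd h ≠ 0 := by
            intro h0
            apply hne
            have : h = Multiplicative.ofAdd (Multiplicative.toAdd h) := rfl
            rw [this, h0]
            rfl
          exact zmod2_cases _ hz
        show fPGL 1 h • Projectivization.mk ℂ v hv ∈ XT
        rw [hval, hz2]
        show ρt ^ (1 : ℕ) • _ ∈ XT
        rw [pow_one]
        exact pingT hv hy'
    · exact absurd rfl hij
  · -- cardinality
    right
    refine ⟨0, ?_⟩
    have : Cardinal.mk (Gi 0) = 3 := by
      show Cardinal.mk (Multiplicative (ZMod 3)) = 3
      rw [Cardinal.mk_congr (Multiplicative.toAdd (α := ZMod 3)), Cardinal.mk_fintype]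
      simp
    show (3 : Cardinal) ≤ Cardinal.mk (Gi 0)
    rw [this]

end Stmt14

namespace Stmt14

open Matrix Polynomial

noncomputable def fgen (A : ℂ) (hA : A ≠ 0) : Fin 2 → GL2 := ![MsA A hA, Mt0]

noncomputable def ρA (A : ℂ) (hA : A ≠ 0) : Hgrp →* PGL2 :=
  PresentedGroup.toGroup (f := fun i => pr (fgen A hA i))
  (by
    intro r hr
    rcases hr with h | h
    · subst h
      rw [map_pow, FreeGroup.lift_apply_of]
      show (pr (fgen A hA 0)) ^ 3 = 1
      have : fgen A hA 0 = MsA A hA := rfl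
      rw [this]
      exact pr_MsA_cube A hA
    · rw [Set.mem_singleton_iff] at h
      subst h
      rw [map_pow, FreeGroup.lift_apply_of]
      show (pr (fgen A hA 1)) ^ 2 = 1
      have : fgen A hA 1 = Mt0 := rfl
      rw [this]
      exact pr_Mt0_sq)

lemma ρA_of (A : ℂ) (hA : A ≠ 0) (i : Fin 2) :
    ρA A hA (PresentedGroup.of i) = pr (fgen A hA i) :=
  PresentedGroup.toGroup.of _

lemma χψ_eq_ρ10 (g : Hgrp) : χ (ψ g) = ρA 10 (by norm_num) g := by
  have : χ.comp ψ = ρA 10 (by norm_num) := by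
    apply PresentedGroup.ext
    intro i
    fin_cases i
    · show χ (ψ (PresentedGroup.of 0)) = _
      rw [ψ_of, ρA_of]
      show χ (Monoid.CoprodI.of (gen 0)) = pr M10
      rw [χ, Monoid.CoprodI.lift_of]
      show ρs ^ (1 : ZMod 3).val = pr M10
      have : (1 : ZMod 3).val = 1 := rfl
      rw [this, pow_one]
      rfl
    · show χ (ψ (PresentedGroup.of 1)) = _
      rw [ψ_of, ρA_of]
      show χ (Monoid.CoprodI.of (gen 1)) = pr Mt0
      rw [χ, Monoid.CoprodI.lift_of]
      show ρt ^ (1 : ZMod 2).val = pr Mt0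
      have : (1 : ZMod 2).val = 1 := rfl
      rw [this, pow_one]
      rfl
  exact DFunLike.congr_fun this g

lemma ρ10_faithful (g : Hgrp) (h : ρA 10 (by norm_num) g = 1) : g = 1 := by
  have h1 : χ (ψ g) = χ 1 := by rw [χψ_eq_ρ10, _root_.map_one, h]
  have h2 : ψ g = 1 := χ_inj h1
  have := retr_ψ g
  rw [h2, _root_.map_one] at this
  exact this.symm

/-- matrices of Laurent-cleared letters, over ℂ[X] -/
noncomputable def mPoly : Fin 2 × Bool → Matrix (Fin 2) (Fin 2) (Polynomial ℂ) := fun x =>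
  if x.1 = 0 then
    (if x.2 then !![0, 1; -X^2, X] else !![X, -1; X^2, 0])
  else
    (if x.2 then !![0, 1; -1, 0] else !![0, -1; 1, 0])

lemma val_MsA_inv (A : ℂ) (hA : A ≠ 0) :
    (((MsA A hA)⁻¹ : GL2) : Matrix (Fin 2) (Fin 2) ℂ) = !![1, -A⁻¹; A, 0] := by
  rw [Matrix.GeneralLinearGroup.coe_inv]
  apply Matrix.inv_eq_right_inv
  rw [val_MsA, Matrix.mul_fin_two]
  ext i j
  fin_cases i <;> fin_cases j <;> simp [Matrix.one_apply] <;> field_simp <;> ring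

lemma val_Mt0_inv :
    (((Mt0)⁻¹ : GL2) : Matrix (Fin 2) (Fin 2) ℂ) = !![0, -1; 1, 0] := by
  rw [Matrix.GeneralLinearGroup.coe_inv]
  apply Matrix.inv_eq_right_inv
  rw [val_Mt0, Matrix.mul_fin_two]
  ext i j
  fin_cases i <;> fin_cases j <;> norm_num [Matrix.one_apply]

lemma letter_eval (A : ℂ) (hA : A ≠ 0) (x : Fin 2 × Bool) :
    ∃ c : ℂ, c ≠ 0 ∧ (mPoly x).map (Polynomial.eval A)
      = c • (((bif x.2 then fgen A hA x.1 else (fgen A hA x.1)⁻¹) : GL2) :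
          Matrix (Fin 2) (Fin 2) ℂ) := by
  obtain ⟨i, b⟩ := x
  fin_cases i <;> cases b
  · -- (0, false) : inverse of s
    refine ⟨A, hA, ?_⟩
    show (mPoly (0, false)).map (Polynomial.eval A)
        = A • (((MsA A hA)⁻¹ : GL2) : Matrix (Fin 2) (Fin 2) ℂ)
    rw [val_MsA_inv A hA]
    ext i j
    fin_cases i <;> fin_cases j <;>
      simp [mPoly, Matrix.map_apply, pow_two] <;> try field_simp
  · -- (0, true) : s
    refine ⟨A, hA, ?_⟩
    show (mPoly (0, true)).map (Polynomial.eval A)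
        = A • ((MsA A hA : GL2) : Matrix (Fin 2) (Fin 2) ℂ)
    rw [val_MsA]
    ext i j
    fin_cases i <;> fin_cases j <;>
      simp [mPoly, Matrix.map_apply, pow_two] <;> try field_simp
  · -- (1, false) : inverse of t
    refine ⟨1, one_ne_zero, ?_⟩
    show (mPoly (1, false)).map (Polynomial.eval A)
        = (1 : ℂ) • (((Mt0)⁻¹ : GL2) : Matrix (Fin 2) (Fin 2) ℂ)
    rw [val_Mt0_inv, one_smul]
    ext i j
    fin_cases i <;> fin_cases j <;> try simp [mPoly, Matrix.map_apply]
  · -- (1, true) : t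
    refine ⟨1, one_ne_zero, ?_⟩
    show (mPoly (1, true)).map (Polynomial.eval A)
        = (1 : ℂ) • ((Mt0 : GL2) : Matrix (Fin 2) (Fin 2) ℂ)
    rw [val_Mt0, one_smul]
    ext i j
    fin_cases i <;> fin_cases j <;> try simp [mPoly, Matrix.map_apply]

lemma list_eval (A : ℂ) (hA : A ≠ 0) (L : List (Fin 2 × Bool)) :
    ∃ c : ℂ, c ≠ 0 ∧ ((L.map mPoly).prod).map (Polynomial.eval A)
      = c • ((((L.map fun x => bif x.2 then fgen A hA x.1 else (fgen A hA x.1)⁻¹).prod : GL2)) :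
          Matrix (Fin 2) (Fin 2) ℂ) := by
  induction L with
  | nil =>
    refine ⟨1, one_ne_zero, ?_⟩
    simp only [List.map_nil, List.prod_nil, one_smul, Matrix.GeneralLinearGroup.coe_one]
    ext i j
    simp [Matrix.map_apply, Matrix.one_apply]
    split <;> simp
  | cons x L ih =>
    obtain ⟨c1, hc1, h1⟩ := letter_eval A hA x
    obtain ⟨c, hc, h⟩ := ih
    refine ⟨c1 * c, mul_ne_zero hc1 hc, ?_⟩
    rw [List.map_cons, List.prod_cons, List.map_cons, List.prod_cons]
    have hmul : ((mPoly x) * (L.map mPoly).prod).map (Polynomial.eval A)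
        = (mPoly x).map (Polynomial.eval A) * ((L.map mPoly).prod).map (Polynomial.eval A) := by
      rw [← Polynomial.coe_evalRingHom, Matrix.map_mul]
    rw [hmul, h1, h, Matrix.GeneralLinearGroup.coe_mul, Matrix.smul_mul, Matrix.mul_smul,
      smul_smul]

noncomputable def fGL (A : ℂ) (hA : A ≠ 0) : FreeGroup (Fin 2) →* GL2 :=
  FreeGroup.lift (fgen A hA)

lemma fGL_eq_prod (A : ℂ) (hA : A ≠ 0) (w : FreeGroup (Fin 2)) :
    fGL A hA w
      = ((w.toWord).map fun x => bif x.2 then fgen A hA x.1 else (fgen A hA x.1)⁻¹).prod := by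
  conv_lhs => rw [← FreeGroup.mk_toWord (x := w)]
  rw [fGL, FreeGroup.lift_mk]

/-- the word matrix over ℂ[X] -/
noncomputable def Qw (w : FreeGroup (Fin 2)) : Matrix (Fin 2) (Fin 2) (Polynomial ℂ) :=
  ((w.toWord).map mPoly).prod

lemma Q_eval (A : ℂ) (hA : A ≠ 0) (w : FreeGroup (Fin 2)) :
    ∃ c : ℂ, c ≠ 0 ∧ (Qw w).map (Polynomial.eval A)
      = c • ((fGL A hA w : GL2) : Matrix (Fin 2) (Fin 2) ℂ) := by
  obtain ⟨c, hc, h⟩ := list_eval A hA w.toWord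
  exact ⟨c, hc, by rw [Qw, h, ← fGL_eq_prod]⟩

lemma ρA_mk (A : ℂ) (hA : A ≠ 0) (w : FreeGroup (Fin 2)) :
    ρA A hA (QuotientGroup.mk w) = pr (fGL A hA w) := by
  have : (ρA A hA).comp (QuotientGroup.mk' (Subgroup.normalClosure hRels))
      = pr.comp (fGL A hA) := by
    apply FreeGroup.ext_hom
    intro i
    show ρA A hA (PresentedGroup.of i) = pr (fGL A hA (FreeGroup.of i))
    rw [ρA_of, fGL, FreeGroup.lift_apply_of]
  exact DFunLike.congr_fun this w

lemma pr_eq_one_iff (u : GL2) :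
    pr u = 1 ↔ ((u : Matrix (Fin 2) (Fin 2) ℂ) 0 1 = 0 ∧
      (u : Matrix (Fin 2) (Fin 2) ℂ) 1 0 = 0 ∧
      (u : Matrix (Fin 2) (Fin 2) ℂ) 0 0 = (u : Matrix (Fin 2) (Fin 2) ℂ) 1 1) := by
  constructor
  · intro h
    have : u ∈ Subgroup.center GL2 := (QuotientGroup.eq_one_iff u).1 h
    exact scalar_of_central u this
  · rintro ⟨h1, h2, h3⟩
    apply (QuotientGroup.eq_one_iff u).2
    apply central_of_scalar u ((u : Matrix (Fin 2) (Fin 2) ℂ) 0 0)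
    rw [Matrix.eta_fin_two ((u : GL2) : Matrix (Fin 2) (Fin 2) ℂ)]
    ext i j
    fin_cases i <;> fin_cases j <;> simp [h1, h2, h3, Matrix.one_apply]

lemma rho_unique (A : ℂ) (hA : A ≠ 0) (ρ : Hgrp →* PGL2)
    (h1 : ρ hs = (QuotientGroup.mk (MsA A hA) : PGL2))
    (h2 : ρ ht = (QuotientGroup.mk Mt0 : PGL2)) : ρ = ρA A hA := by
  apply PresentedGroup.ext
  intro i
  fin_cases i
  · show ρ hs = _
    rw [h1, ρA_of]
    rfl
  · show ρ ht = _
    rw [h2, ρA_of]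
    rfl

end Stmt14

theorem stmt14 (g : Hgrp) (hg : g ≠ 1) :
    {A : ℂ | ∃ (hA : A ≠ 0) (ρ : Hgrp →* PGL2),
      ρ hs = (QuotientGroup.mk (MsA A hA) : PGL2) ∧
      ρ ht = (QuotientGroup.mk Mt0 : PGL2) ∧
      ρ g = 1}.Countable := by
  classical
  open Stmt14 Polynomial in
  obtain ⟨w, hw⟩ := QuotientGroup.mk_surjective (g : FreeGroup (Fin 2) ⧸ Subgroup.normalClosure hRels)
  set p01 := (Qw w) 0 1 with hp01
  set p10 := (Qw w) 1 0 with hp10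
  set pd := (Qw w) 0 0 - (Qw w) 1 1 with hpd
  have key : ∀ (A : ℂ) (hA : A ≠ 0),
      (ρA A hA g = 1 ↔ (p01.eval A = 0 ∧ p10.eval A = 0 ∧ pd.eval A = 0)) := by
    intro A hA
    obtain ⟨c, hc, hQ⟩ := Q_eval A hA w
    set N := ((fGL A hA w : GL2) : Matrix (Fin 2) (Fin 2) ℂ) with hN
    have h01 : p01.eval A = c * N 0 1 := by
      have := congrFun (congrFun hQ 0) 1
      simpa [Matrix.map_apply] using this
    have h10 : p10.eval A = c * N 1 0 := by
      have := congrFun (congrFun hQ 1) 0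
      simpa [Matrix.map_apply] using this
    have h00 : (Qw w 0 0).eval A = c * N 0 0 := by
      have := congrFun (congrFun hQ 0) 0
      simpa [Matrix.map_apply] using this
    have h11 : (Qw w 1 1).eval A = c * N 1 1 := by
      have := congrFun (congrFun hQ 1) 1
      simpa [Matrix.map_apply] using this
    have hd : pd.eval A = c * (N 0 0 - N 1 1) := by
      rw [hpd, Polynomial.eval_sub, h00, h11]
      ring
    rw [← hw, ρA_mk, pr_eq_one_iff]
    constructor
    · rintro ⟨e1, e2, e3⟩
      refine ⟨?_, ?_, ?_⟩
      · rw [h01, hN, e1, mul_zero]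
      · rw [h10, hN, e2, mul_zero]
      · rw [hd, hN, e3, sub_self, mul_zero]
    · rintro ⟨e1, e2, e3⟩
      rw [h01] at e1
      rw [h10] at e2
      rw [hd] at e3
      refine ⟨?_, ?_, ?_⟩
      · have := (mul_eq_zero.1 e1).resolve_left hc
        rwa [hN] at this
      · have := (mul_eq_zero.1 e2).resolve_left hc
        rwa [hN] at this
      · have := sub_eq_zero.1 ((mul_eq_zero.1 e3).resolve_left hc)
        rwa [hN] at this
  have hmem : ∀ A : ℂ, (∃ (hA : A ≠ 0) (ρ : Hgrp →* PGL2),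
      ρ hs = (QuotientGroup.mk (MsA A hA) : PGL2) ∧
      ρ ht = (QuotientGroup.mk Mt0 : PGL2) ∧ ρ g = 1) →
      ∃ hA : A ≠ 0, ρA A hA g = 1 := by
    rintro A ⟨hA, ρ, hρ1, hρ2, hρ3⟩
    refine ⟨hA, ?_⟩
    rw [← rho_unique A hA ρ hρ1 hρ2]
    exact hρ3
  by_cases h1 : p01 = 0
  · by_cases h2 : p10 = 0
    · by_cases h3 : pd = 0
      · exfalso
        apply hg
        apply ρ10_faithful
        rw [key 10 (by norm_num)]
        refine ⟨?_, ?_, ?_⟩ <;> simp [h1, h2, h3]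
      · refine Set.Countable.mono ?_ ((Polynomial.finite_setOf_isRoot h3).countable)
        intro A hA'
        obtain ⟨hA, hρ⟩ := hmem A hA'
        exact ((key A hA).1 hρ).2.2
    · refine Set.Countable.mono ?_ ((Polynomial.finite_setOf_isRoot h2).countable)
      intro A hA'
      obtain ⟨hA, hρ⟩ := hmem A hA'
      exact ((key A hA).1 hρ).2.1
  · refine Set.Countable.mono ?_ ((Polynomial.finite_setOf_isRoot h1).countable)
    intro A hA'
    obtain ⟨hA, hρ⟩ := hmem A hA'
    exact ((key A hA).1 hρ).1
end
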